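/- arXiv:1803.03595 — 2 statements merged into one kernel-verified Lean document; each statement's English description precedes it below -/
import Mathlib

section
/- Let 𝔐 denote the centered Hardy–Littlewood maximal operator on ℝ^d. For 1 < q < ∞ and 1 < p < ∞, 𝔐 is bounded on the amalgam space (L^q, ℓ^p)(ℝ^d): there exists C > 0 such that ‖𝔐(f)‖_{q,p} ≤ C‖f‖_{q,p} for every locally integrable f. -/
open MeasureTheory Metric Set Filter
open scoped ENNReal NNReal Topology

noncomputable section

/-- The unit cube `Q_k = k + [0,1)^d` in `ℝ^d`. -/
def unitCube (d : ℕ) (k : Fin d → ℤ) : Set (Fin d → ℝ) :=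
  {x | ∀ i, (k i : ℝ) ≤ x i ∧ x i < (k i : ℝ) + 1}

/-- The `ℓ^p` norm over `ℤ^d` of an `ℝ≥0∞`-valued sequence. -/
def ellNorm (d : ℕ) (p : ℝ≥0∞) (a : (Fin d → ℤ) → ℝ≥0∞) : ℝ≥0∞ :=
  if p = ∞ then ⨆ k, a k else (∑' k, a k ^ p.toReal) ^ (1 / p.toReal)

/-- The `L^q` norm of an `ℝ≥0∞`-valued function on a set `s ⊆ ℝ^d`. -/
def setLqNorm {d : ℕ} (q : ℝ≥0∞) (g : (Fin d → ℝ) → ℝ≥0∞) (s : Set (Fin d → ℝ)) : ℝ≥0∞ :=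
  if q = ∞ then essSup g (volume.restrict s)
  else (∫⁻ x in s, g x ^ q.toReal) ^ (1 / q.toReal)

/-- The Wiener amalgam quasi-norm of an `ℝ≥0∞`-valued function:
`ℓ^p` (over `ℤ^d`) of the `L^q` norms over the unit cubes `Q_k`. -/
def amalgamNormE (d : ℕ) (q p : ℝ≥0∞) (g : (Fin d → ℝ) → ℝ≥0∞) : ℝ≥0∞ :=
  ellNorm d p fun k => setLqNorm q g (unitCube d k)

/-- The Wiener amalgam quasi-norm `‖f‖_{q,p}` of `f : ℝ^d → ℂ`. -/
def amalgamNorm (d : ℕ) (q p : ℝ≥0∞) (f : (Fin d → ℝ) → ℂ) : ℝ≥0∞ :=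
  amalgamNormE d q p fun x => (‖f x‖₊ : ℝ≥0∞)

/-- The centered Hardy–Littlewood maximal function of `f : ℝ^d → ℂ`, with values
in `ℝ≥0∞`. -/
def maximalFn (d : ℕ) (f : (Fin d → ℝ) → ℂ) (x : Fin d → ℝ) : ℝ≥0∞ :=
  ⨆ r : {r : ℝ // 0 < r},
    (volume (ball x (r : ℝ)))⁻¹ * ∫⁻ y in ball x (r : ℝ), (‖f y‖₊ : ℝ≥0∞)

variable {d : ℕ}

/-- maximal operator for ennreal-valued functions -/
def MM (d : ℕ) (g : (Fin d → ℝ) → ℝ≥0∞) (x : Fin d → ℝ) : ℝ≥0∞ :=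
  ⨆ r : {r : ℝ // 0 < r},
    (volume (ball x (r : ℝ)))⁻¹ * ∫⁻ y in ball x (r : ℝ), g y

lemma vol_ball (x : Fin d → ℝ) {r : ℝ} (hr : 0 < r) :
    volume (ball x r) = ENNReal.ofReal ((2*r)^d) := by
  rw [Real.volume_pi_ball x hr]; simp

lemma vol_ball_pos (x : Fin d → ℝ) {r : ℝ} (hr : 0 < r) : volume (ball x r) ≠ 0 :=
  (measure_ball_pos _ _ hr).ne'

lemma vol_ball_ne_top (x : Fin d → ℝ) {r : ℝ} (hr : 0 < r) : volume (ball x r) ≠ ∞ := by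
  rw [vol_ball x hr]; exact ENNReal.ofReal_ne_top

lemma avg_le_MM (g : (Fin d → ℝ) → ℝ≥0∞) (x : Fin d → ℝ) {r : ℝ} (hr : 0 < r) :
    (volume (ball x r))⁻¹ * ∫⁻ y in ball x r, g y ≤ MM d g x :=
  le_iSup (fun r : {r : ℝ // 0 < r} =>
    (volume (ball x (r : ℝ)))⁻¹ * ∫⁻ y in ball x (r : ℝ), g y) ⟨r, hr⟩

lemma MM_mono {g g' : (Fin d → ℝ) → ℝ≥0∞} (h : ∀ y, g y ≤ g' y) (x : Fin d → ℝ) :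
    MM d g x ≤ MM d g' x := by
  refine iSup_le fun r => le_trans ?_ (avg_le_MM g' x r.2)
  exact mul_le_mul_right (lintegral_mono fun y => h y) _

lemma MM_congr_ae {g g' : (Fin d → ℝ) → ℝ≥0∞} (h : g =ᵐ[volume] g') :
    MM d g = MM d g' := by
  funext x
  unfold MM
  congr 1
  funext r
  congr 1
  exact lintegral_congr_ae (ae_restrict_of_ae h)

lemma MM_add_le {g1 g2 : (Fin d → ℝ) → ℝ≥0∞} (hg1 : Measurable g1) (x : Fin d → ℝ) :
    MM d (fun y => g1 y + g2 y) x ≤ MM d g1 x + MM d g2 x := by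
  refine iSup_le fun r => ?_
  have heq : (∫⁻ y in ball x (r:ℝ), (g1 y + g2 y)) =
      (∫⁻ y in ball x (r:ℝ), g1 y) + (∫⁻ y in ball x (r:ℝ), g2 y) := lintegral_add_left hg1 _
  show (volume (ball x (r:ℝ)))⁻¹ * ∫⁻ y in ball x (r:ℝ), (g1 y + g2 y) ≤ _
  rw [heq, mul_add]
  exact add_le_add (avg_le_MM g1 x r.2) (avg_le_MM g2 x r.2)

lemma MM_le_const {g : (Fin d → ℝ) → ℝ≥0∞} {c : ℝ≥0∞} (h : ∀ y, g y ≤ c) (x : Fin d → ℝ) :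
    MM d g x ≤ c := by
  refine iSup_le fun r => ?_
  calc (volume (ball x (r:ℝ)))⁻¹ * ∫⁻ y in ball x (r:ℝ), g y
      ≤ (volume (ball x (r:ℝ)))⁻¹ * (c * volume (ball x (r:ℝ))) := by
        gcongr
        calc ∫⁻ y in ball x (r:ℝ), g y ≤ ∫⁻ _ in ball x (r:ℝ), c := lintegral_mono h
        _ = c * volume (ball x (r:ℝ)) := by simp [setLIntegral_const]
    _ = c * ((volume (ball x (r:ℝ)))⁻¹ * volume (ball x (r:ℝ))) := by ring
    _ = c := by
        rw [ENNReal.inv_mul_cancel (vol_ball_pos x r.2) (vol_ball_ne_top x r.2), mul_one]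

lemma MM_lsc {g : (Fin d → ℝ) → ℝ≥0∞} (hg : Measurable g) :
    LowerSemicontinuous (MM d g) := by
  intro x y hy
  obtain ⟨r, hr⟩ := lt_iSup_iff.mp hy
  set R : ℝ := (r : ℝ)
  have hR : 0 < R := r.2
  -- continuity from below of the integral over balls
  have hmono : Monotone fun n : ℕ => ∫⁻ z in ball x (R - R/(n+2)), g z := by
    intro a b hab
    refine lintegral_mono' (Measure.restrict_mono (ball_subset_ball ?_) le_rfl) le_rfl
    have : (a:ℝ) + 2 ≤ (b:ℝ) + 2 := by exact_mod_cast by omega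
    have h2 : R/((b:ℝ)+2) ≤ R/((a:ℝ)+2) := by
      apply div_le_div_of_nonneg_left hR.le (by positivity) this
    linarith
  have hcup : ball x R = ⋃ n : ℕ, ball x (R - R/(n+2)) := by
    ext z
    simp only [mem_ball, mem_iUnion]
    constructor
    · intro hz
      obtain ⟨n, hn⟩ := exists_nat_gt (R / (R - dist z x))
      refine ⟨n, ?_⟩
      have hpos : 0 < R - dist z x := by linarith
      have hn' : R / (R - dist z x) < (n:ℝ) + 2 := by
        have : (0:ℝ) < 2 := by norm_num
        nlinarith [hn]
      have : R / ((n:ℝ)+2) < R - dist z x := by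
        rw [div_lt_iff₀ (by positivity)] at hn' ⊢
        nlinarith
      linarith
    · rintro ⟨n, hn⟩
      have : 0 < R/((n:ℝ)+2) := by positivity
      linarith
  have hlim : (∫⁻ z in ball x R, g z) = ⨆ n : ℕ, ∫⁻ z in ball x (R - R/(n+2)), g z := by
    have := MeasureTheory.lintegral_iSup (μ := volume) (f := fun n z =>
        (ball x (R - R/(n+2))).indicator g z) ?_ ?_
    · rw [hcup]
      have e1 : ∀ n : ℕ, (∫⁻ z in ball x (R - R/(n+2)), g z)
          = ∫⁻ z, (ball x (R - R/(n+2))).indicator g z := by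
        intro n; rw [lintegral_indicator measurableSet_ball]
      have e2 : (∫⁻ z in ⋃ n : ℕ, ball x (R - R/(n+2)), g z)
          = ∫⁻ z, (⋃ n : ℕ, ball x (R - R/(n+2))).indicator g z := by
        rw [lintegral_indicator (MeasurableSet.iUnion fun n => measurableSet_ball)]
      rw [e2]
      simp_rw [e1]
      rw [← this]
      congr 1
      funext z
      rw [Set.indicator_iUnion_apply rfl]
    · exact fun n => hg.indicator measurableSet_ball
    · intro a b hab z
      classical
      by_cases hz : z ∈ ball x (R - R/(a+2))
      · have hz' : z ∈ ball x (R - R/(b+2)) := by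
          refine ball_subset_ball ?_ hz
          have : (a:ℝ) + 2 ≤ (b:ℝ) + 2 := by exact_mod_cast by omega
          have h2 : R/((b:ℝ)+2) ≤ R/((a:ℝ)+2) :=
            div_le_div_of_nonneg_left hR.le (by positivity) this
          linarith
        simp [Set.indicator_of_mem hz, Set.indicator_of_mem hz']
      · simp [Set.indicator_of_notMem hz]
  -- pick n with y < avg over smaller ball
  have hy' : y < (volume (ball x R))⁻¹ * ⨆ n : ℕ, ∫⁻ z in ball x (R - R/(n+2)), g z := by
    rw [← hlim]; exact hr
  rw [ENNReal.mul_iSup] at hy'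
  obtain ⟨n, hn⟩ := lt_iSup_iff.mp hy'
  set r' : ℝ := R - R/(n+2) with hr'def
  have hr'lt : r' < R := by
    have : 0 < R/((n:ℝ)+2) := by positivity
    simp only [hr'def]; linarith
  -- eventual bound
  have hball : ball x (R - r') ∈ 𝓝 x := ball_mem_nhds x (by linarith)
  filter_upwards [hball] with x' hx'
  have hsub : ball x r' ⊆ ball x' R := fun z hz => by
    simp only [mem_ball] at *
    have := dist_triangle z x x'
    have hxx' : dist x x' < R - r' := by rw [dist_comm]; exact hx'
    linarith
  have hvol : volume (ball x' R) = volume (ball x R) := by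
    rw [vol_ball _ hR, vol_ball _ hR]
  calc y < (volume (ball x R))⁻¹ * ∫⁻ z in ball x r', g z := hn
    _ ≤ (volume (ball x' R))⁻¹ * ∫⁻ z in ball x' R, g z := by
        rw [hvol]
        gcongr
    _ ≤ MM d g x' := avg_le_MM g x' hR

lemma MM_measurable {g : (Fin d → ℝ) → ℝ≥0∞} (hg : Measurable g) :
    Measurable (MM d g) := (MM_lsc hg).measurable

lemma MM_isOpen_gt {g : (Fin d → ℝ) → ℝ≥0∞} (hg : Measurable g) (t : ℝ≥0∞) :
    IsOpen {x | t < MM d g x} := by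
  have := (MM_lsc (g := g) hg).isOpen_preimage t
  exact this


lemma two_rpow_ne_zero (y : ℝ) : (2:ℝ≥0∞) ^ y ≠ 0 :=
  (ENNReal.rpow_pos (by norm_num) (by norm_num)).ne'

lemma two_rpow_ne_top (y : ℝ) : (2:ℝ≥0∞) ^ y ≠ ∞ := by
  intro h
  have := ENNReal.rpow_pos (x := 2) (p := -y) (by norm_num) (by norm_num)
  rw [ENNReal.rpow_neg, h, ENNReal.inv_top] at this
  exact lt_irrefl 0 this

lemma exists_dyadic {a : ℝ≥0∞} (h0 : a ≠ 0) (ht : a ≠ ∞) :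
    ∃ n : ℤ, (2:ℝ≥0∞) ^ ((n:ℝ)) < a ∧ a ≤ (2:ℝ≥0∞) ^ ((n:ℝ)+1) := by
  have hpos : 0 < a.toReal := ENNReal.toReal_pos h0 ht
  set L : ℝ := Real.logb 2 a.toReal with hL
  refine ⟨⌈L⌉ - 1, ?_, ?_⟩
  · have h1 : ((⌈L⌉ - 1 : ℤ) : ℝ) < L := by
      push_cast
      have := Int.ceil_lt_add_one (R := ℝ) L
      linarith
    have h2 : (2:ℝ) ^ (((⌈L⌉ - 1 : ℤ) : ℝ)) < (2:ℝ) ^ L :=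
      Real.rpow_lt_rpow_left_iff (by norm_num) |>.mpr h1
    rw [hL, Real.rpow_logb (by norm_num) (by norm_num) hpos] at h2
    calc (2:ℝ≥0∞) ^ (((⌈L⌉ - 1 : ℤ) : ℝ)) =
        ENNReal.ofReal ((2:ℝ) ^ (((⌈L⌉ - 1 : ℤ) : ℝ))) := by
          rw [← ENNReal.ofReal_rpow_of_pos (by norm_num)]
          norm_num
      _ < ENNReal.ofReal a.toReal := ENNReal.ofReal_lt_ofReal_iff hpos |>.mpr h2
      _ = a := ENNReal.ofReal_toReal ht
  · have h1 : L ≤ ((⌈L⌉ - 1 : ℤ) : ℝ) + 1 := by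
      push_cast
      have := Int.le_ceil L
      linarith
    have h2 : (2:ℝ) ^ L ≤ (2:ℝ) ^ (((⌈L⌉ - 1 : ℤ) : ℝ) + 1) :=
      Real.rpow_le_rpow_left_iff (by norm_num) |>.mpr h1
    rw [hL, Real.rpow_logb (by norm_num) (by norm_num) hpos] at h2
    calc a = ENNReal.ofReal a.toReal := (ENNReal.ofReal_toReal ht).symm
      _ ≤ ENNReal.ofReal ((2:ℝ) ^ (((⌈L⌉ - 1 : ℤ) : ℝ) + 1)) := ENNReal.ofReal_le_ofReal h2
      _ = (2:ℝ≥0∞) ^ (((⌈L⌉ - 1 : ℤ) : ℝ) + 1) := by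
          rw [← ENNReal.ofReal_rpow_of_pos (by norm_num)]
          norm_num

/-- The maximal weak type (1,1) inequality. -/
lemma MM_weak (d : ℕ) (g : (Fin d → ℝ) → ℝ≥0∞) {l : ℝ≥0∞} (hl0 : l ≠ 0) (hlt : l ≠ ∞) :
    volume {x | l < MM d g x} ≤ (5:ℝ≥0∞)^d * l⁻¹ * ∫⁻ y, g y := by
  classical
  set Em : ℕ → Set (Fin d → ℝ) := fun m =>
    {x | ∃ r : ℝ, 0 < r ∧ r ≤ (m:ℝ) ∧ l * volume (ball x r) < ∫⁻ y in ball x r, g y} with hEm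
  have hmono : Monotone Em := by
    intro a b hab x ⟨r, h1, h2, h3⟩
    exact ⟨r, h1, h2.trans (by exact_mod_cast hab), h3⟩
  have hcover : {x | l < MM d g x} ⊆ ⋃ m, Em m := by
    intro x hx
    simp only [mem_setOf_eq, MM, lt_iSup_iff] at hx
    obtain ⟨r, hr⟩ := hx
    have hrpos : (0:ℝ) < r := r.2
    have hkey : l * volume (ball x (r:ℝ)) < ∫⁻ y in ball x (r:ℝ), g y := by
      have hv0 := vol_ball_pos x hrpos
      have hvt := vol_ball_ne_top x hrpos
      rw [← ENNReal.lt_div_iff_mul_lt (Or.inl hv0) (Or.inl hvt)]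
      rw [ENNReal.div_eq_inv_mul]
      exact hr
    obtain ⟨m, hm⟩ := exists_nat_ge (r:ℝ)
    exact mem_iUnion.mpr ⟨m, r, hrpos, hm, hkey⟩
  have hEmbound : ∀ m : ℕ, volume (Em m) ≤ (5:ℝ≥0∞)^d * l⁻¹ * ∫⁻ y, g y := by
    intro m
    -- choose radii
    have hch : ∀ x ∈ Em m, ∃ r : ℝ, 0 < r ∧ r ≤ (m:ℝ) ∧
        l * volume (ball x r) < ∫⁻ y in ball x r, g y := fun x hx => hx
    choose! rad hrad0 hradm hradkey using hch
    obtain ⟨u, hu_sub, hu_disj, hu_cov⟩ :=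
      Vitali.exists_disjoint_subfamily_covering_enlargement_closedBall (Em m) id rad (m:ℝ)
        (fun a ha => hradm a ha) 4 (by norm_num)
    -- u is countable
    have hcnt : u.Countable := by
      have := MeasureTheory.Measure.countable_meas_pos_of_disjoint_iUnion
        (μ := volume) (ι := ↥u) (As := fun b => closedBall (b : Fin d → ℝ) (rad b))
        (fun b => measurableSet_closedBall)
        (fun b c hbc => hu_disj b.2 c.2 (Subtype.coe_injective.ne hbc))
      have hall : ∀ b : ↥u, 0 < volume (closedBall (b : Fin d → ℝ) (rad b)) := by
        intro b
        have hb0 : 0 < rad b := hrad0 _ (hu_sub b.2)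
        exact lt_of_lt_of_le (measure_ball_pos _ _ hb0) (measure_mono ball_subset_closedBall)
      have : (Set.univ : Set ↥u).Countable := by
        have := this
        convert this using 1
        ext b; simp [hall b]
      haveI := (Set.countable_univ_iff).mp this
      exact Set.countable_coe_iff.mp inferInstance
    haveI := hcnt.to_subtype
    -- covering
    have hEm_sub : Em m ⊆ ⋃ b : ↥u, closedBall (b : Fin d → ℝ) (4 * rad (b:Fin d → ℝ)) := by
      intro a ha
      obtain ⟨b, hbu, hsub⟩ := hu_cov a ha
      have : a ∈ closedBall a (rad a) := mem_closedBall_self (hrad0 a ha).le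
      exact mem_iUnion.mpr ⟨⟨b, hbu⟩, hsub this⟩
    calc volume (Em m) ≤ ∑' b : ↥u, volume (closedBall (b : Fin d → ℝ) (4 * rad (b:Fin d → ℝ))) :=
          le_trans (measure_mono hEm_sub) (measure_iUnion_le _)
      _ ≤ ∑' b : ↥u, (5:ℝ≥0∞)^d * (l⁻¹ * ∫⁻ y in ball (b : Fin d → ℝ) (rad (b:Fin d → ℝ)), g y) := by
          refine ENNReal.tsum_le_tsum fun b => ?_
          have hb0 : 0 < rad (b:Fin d → ℝ) := hrad0 _ (hu_sub b.2)
          have h1 : closedBall (b : Fin d → ℝ) (4 * rad (b:Fin d → ℝ)) ⊆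
              ball (b : Fin d → ℝ) (5 * rad (b:Fin d → ℝ)) :=
            closedBall_subset_ball (by linarith)
          have h2 : volume (ball (b : Fin d → ℝ) (5 * rad (b:Fin d → ℝ))) =
              (5:ℝ≥0∞)^d * volume (ball (b : Fin d → ℝ) (rad (b:Fin d → ℝ))) := by
            rw [vol_ball _ (by linarith : (0:ℝ) < 5 * rad (b:Fin d → ℝ)), vol_ball _ hb0]
            rw [show (2 * (5 * rad (b:Fin d → ℝ))) = 5 * (2 * rad (b:Fin d → ℝ)) by ring,
              mul_pow, ENNReal.ofReal_mul (by positivity),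
              ENNReal.ofReal_pow (by norm_num : (0:ℝ) ≤ 5)]
            norm_num
          have h3 : volume (ball (b : Fin d → ℝ) (rad (b:Fin d → ℝ))) ≤
              l⁻¹ * ∫⁻ y in ball (b : Fin d → ℝ) (rad (b:Fin d → ℝ)), g y := by
            have h := (hradkey _ (hu_sub b.2)).le
            rw [mul_comm] at h
            have h' := (ENNReal.le_div_iff_mul_le (Or.inl hl0) (Or.inl hlt)).mpr h
            rwa [ENNReal.div_eq_inv_mul] at h'
          calc volume (closedBall (b : Fin d → ℝ) (4 * rad (b:Fin d → ℝ)))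
              ≤ volume (ball (b : Fin d → ℝ) (5 * rad (b:Fin d → ℝ))) := measure_mono h1
            _ = (5:ℝ≥0∞)^d * volume (ball (b : Fin d → ℝ) (rad (b:Fin d → ℝ))) := h2
            _ ≤ (5:ℝ≥0∞)^d * (l⁻¹ * ∫⁻ y in ball (b : Fin d → ℝ) (rad (b:Fin d → ℝ)), g y) := by
                exact mul_le_mul_right h3 _
      _ = (5:ℝ≥0∞)^d * (l⁻¹ * ∑' b : ↥u, ∫⁻ y in ball (b : Fin d → ℝ) (rad (b:Fin d → ℝ)), g y) := by
          rw [ENNReal.tsum_mul_left, ENNReal.tsum_mul_left]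
      _ ≤ (5:ℝ≥0∞)^d * (l⁻¹ * ∫⁻ y, g y) := by
          gcongr
          have hdisj : Pairwise (Function.onFun Disjoint fun b : ↥u =>
              ball (b : Fin d → ℝ) (rad (b:Fin d → ℝ))) := by
            intro b c hbc
            exact Disjoint.mono ball_subset_closedBall ball_subset_closedBall
              (hu_disj b.2 c.2 (Subtype.coe_injective.ne hbc))
          rw [← MeasureTheory.lintegral_iUnion (fun b => measurableSet_ball) hdisj]
          exact lintegral_mono' (Measure.restrict_le_self) le_rfl
      _ = (5:ℝ≥0∞)^d * l⁻¹ * ∫⁻ y, g y := by ring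
  calc volume {x | l < MM d g x} ≤ volume (⋃ m, Em m) := measure_mono hcover
    _ = ⨆ m, volume (Em m) := (hmono.directed_le).measure_iUnion
    _ ≤ (5:ℝ≥0∞)^d * l⁻¹ * ∫⁻ y, g y := iSup_le hEmbound


lemma MM_strong (d : ℕ) {s : ℝ} (hs : 1 < s) :
    ∃ C : ℝ≥0∞, C ≠ 0 ∧ C ≠ ∞ ∧ ∀ g : (Fin d → ℝ) → ℝ≥0∞, Measurable g →
      (∫⁻ x, (MM d g x) ^ s) ≤ C * ∫⁻ x, (g x) ^ s := by
  have hs0 : (0:ℝ) < s := by linarith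
  set κ : ℝ≥0∞ := (1 - (2:ℝ≥0∞) ^ (-(s-1)))⁻¹ with hκdef
  have hr1 : (2:ℝ≥0∞) ^ (-(s-1)) < 1 :=
    ENNReal.rpow_lt_one_of_one_lt_of_neg (by norm_num) (by linarith)
  have hκ0 : κ ≠ 0 := by
    rw [hκdef, ne_eq, ENNReal.inv_eq_zero]
    exact (lt_of_le_of_lt tsub_le_self ENNReal.one_lt_top).ne
  have hκt : κ ≠ ∞ := by
    rw [hκdef, ne_eq, ENNReal.inv_eq_top, tsub_eq_zero_iff_le]
    exact not_le.mpr hr1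
  have h5d0 : ((5:ℝ≥0∞)^d) ≠ 0 := pow_ne_zero d (by norm_num)
  have h5dt : ((5:ℝ≥0∞)^d) ≠ ∞ := ENNReal.pow_ne_top (by norm_num)
  refine ⟨(5:ℝ≥0∞)^d * (2:ℝ≥0∞)^(2*s) * κ, ?_, ?_, ?_⟩
  · exact mul_ne_zero (mul_ne_zero h5d0 (two_rpow_ne_zero _)) hκ0
  · exact ENNReal.mul_ne_top (ENNReal.mul_ne_top h5dt (two_rpow_ne_top _)) hκt
  intro g hg
  have hgs : Measurable fun x => g x ^ s :=
    (by fun_prop : Measurable fun z : ℝ≥0∞ => z ^ s).comp hg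
  by_cases hI : (∫⁻ x, g x ^ s) = ∞
  · rw [hI, ENNReal.mul_top
      (mul_ne_zero (mul_ne_zero h5d0 (two_rpow_ne_zero _)) hκ0)]
    exact le_top
  -- weak-type with truncation
  have key : ∀ t : ℝ≥0∞, t ≠ 0 → t ≠ ∞ →
      volume {x | 2*t < MM d g x} ≤
        (5:ℝ≥0∞)^d * t⁻¹ * ∫⁻ x, ({y | t < g y}.indicator g x) := by
    intro t ht0 htt
    have hmeas : MeasurableSet {y | t < g y} := measurableSet_lt measurable_const hg
    have hsplit : ∀ x, MM d g x ≤ MM d ({y | t < g y}.indicator g) x + t := by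
      intro x
      have hgeq : ∀ y, g y = {y | t < g y}.indicator g y + {y | t < g y}ᶜ.indicator g y := by
        intro y
        exact (congrFun (Set.indicator_self_add_compl {y | t < g y} g) y).symm
      have h1 : MM d g x = MM d (fun y => {y | t < g y}.indicator g y
          + {y | t < g y}ᶜ.indicator g y) x := by
        congr 1; funext y; exact hgeq y
      rw [h1]
      refine le_trans (MM_add_le (hg.indicator hmeas) x) ?_
      gcongr
      refine MM_le_const (fun y => ?_) x
      by_cases hy : y ∈ {y | t < g y}ᶜ
      · rw [Set.indicator_of_mem hy]; exact le_of_not_gt hy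
      · rw [Set.indicator_of_notMem hy]; exact zero_le
    have hsub : {x | 2*t < MM d g x} ⊆ {x | t < MM d ({y | t < g y}.indicator g) x} := by
      intro x hx
      have h1 : 2*t < MM d ({y | t < g y}.indicator g) x + t :=
        lt_of_lt_of_le hx (hsplit x)
      rw [two_mul] at h1
      rw [mem_setOf_eq]
      exact (ENNReal.add_lt_add_iff_right htt).mp h1
    exact le_trans (measure_mono hsub) (MM_weak d _ ht0 htt)
  -- truncated integral bound
  have ind_le : ∀ (t : ℝ≥0∞), t ≠ 0 → t ≠ ∞ → ∀ x,
      ({y | t < g y}.indicator g x) ≤ t^(1-s) * g x ^ s := by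
    intro t ht0 htt x
    by_cases hx : x ∈ {y | t < g y}
    · rw [Set.indicator_of_mem hx]
      have htx : t < g x := hx
      by_cases hgx : g x = ∞
      · rw [hgx, ENNReal.top_rpow_of_pos hs0,
          ENNReal.mul_top (ENNReal.rpow_pos (pos_iff_ne_zero.mpr ht0) htt).ne']
      · have hgx0 : g x ≠ 0 := fun h => by
          rw [h] at htx; exact absurd htx (not_lt.mpr (zero_le : (0:ℝ≥0∞) ≤ t))
        calc g x = g x ^ ((1-s) + s) := by
              rw [show (1-s)+s = (1:ℝ) by ring, ENNReal.rpow_one]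
          _ = g x ^ (1-s) * g x ^ s := ENNReal.rpow_add _ _ hgx0 hgx
          _ ≤ t ^ (1-s) * g x ^ s := by
              refine mul_le_mul_left ?_ _
              rw [show (1:ℝ)-s = -(s-1) by ring, ENNReal.rpow_neg, ENNReal.rpow_neg]
              exact ENNReal.inv_le_inv.mpr (ENNReal.rpow_le_rpow htx.le (by linarith))
    · rw [Set.indicator_of_notMem hx]; exact zero_le
  -- a.e. finiteness of MM g
  have hfin : volume {x | MM d g x = ∞} = 0 := by
    by_contra hne
    have hpos : 0 < volume {x | MM d g x = ∞} := pos_iff_ne_zero.mpr hne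
    have hbound : ∀ n : ℕ, volume {x | MM d g x = ∞} ≤
        ((5:ℝ≥0∞)^d * ∫⁻ x, g x ^ s) * ((2:ℝ≥0∞)^(-s))^n := by
      intro n
      set t : ℝ≥0∞ := 2^((n:ℝ)) with htdef
      have h1 : {x | MM d g x = ∞} ⊆ {x | 2*t < MM d g x} := by
        intro x hx
        rw [mem_setOf_eq] at hx ⊢
        rw [hx]
        exact (ENNReal.mul_ne_top (by norm_num) (two_rpow_ne_top _)).lt_top
      have h2 : (∫⁻ x, ({y | t < g y}.indicator g x)) ≤ t^(1-s) * ∫⁻ x, g x ^ s := by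
        calc (∫⁻ x, ({y | t < g y}.indicator g x)) ≤ ∫⁻ x, t^(1-s) * g x ^ s :=
              lintegral_mono (ind_le t (two_rpow_ne_zero _) (two_rpow_ne_top _))
          _ = t^(1-s) * ∫⁻ x, g x ^ s := lintegral_const_mul _ hgs
      have harr : (5:ℝ≥0∞)^d * t⁻¹ * (t^(1-s) * ∫⁻ x, g x ^ s)
          = ((5:ℝ≥0∞)^d * ∫⁻ x, g x ^ s) * ((2:ℝ≥0∞)^(-s))^n := by
        have e1 : t⁻¹ = (2:ℝ≥0∞)^(-(n:ℝ)) := by rw [htdef, ← ENNReal.rpow_neg]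
        have e2 : t^(1-s) = (2:ℝ≥0∞)^((n:ℝ)*(1-s)) := by
          rw [htdef, ← ENNReal.rpow_mul]
        have e3 : (2:ℝ≥0∞)^(-(n:ℝ)) * (2:ℝ≥0∞)^((n:ℝ)*(1-s)) = ((2:ℝ≥0∞)^(-s))^n := by
          calc (2:ℝ≥0∞)^(-(n:ℝ)) * (2:ℝ≥0∞)^((n:ℝ)*(1-s))
              = (2:ℝ≥0∞)^(-(n:ℝ) + (n:ℝ)*(1-s)) :=
                (ENNReal.rpow_add _ _ (by norm_num) (by norm_num)).symm
            _ = (2:ℝ≥0∞)^((-s) * (n:ℝ)) := by rw [show -(n:ℝ) + (n:ℝ)*(1-s) = (-s)*(n:ℝ) by ring]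
            _ = ((2:ℝ≥0∞)^(-s))^((n:ℝ)) := ENNReal.rpow_mul 2 (-s) (n:ℝ)
            _ = ((2:ℝ≥0∞)^(-s))^n := ENNReal.rpow_natCast _ n
        calc (5:ℝ≥0∞)^d * t⁻¹ * (t^(1-s) * ∫⁻ x, g x ^ s)
            = ((5:ℝ≥0∞)^d * ∫⁻ x, g x ^ s) * (t⁻¹ * t^(1-s)) := by ring
          _ = ((5:ℝ≥0∞)^d * ∫⁻ x, g x ^ s) * ((2:ℝ≥0∞)^(-s))^n := by rw [e1, e2, e3]
      calc volume {x | MM d g x = ∞} ≤ volume {x | 2*t < MM d g x} := measure_mono h1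
        _ ≤ (5:ℝ≥0∞)^d * t⁻¹ * ∫⁻ x, ({y | t < g y}.indicator g x) :=
            key t (two_rpow_ne_zero _) (two_rpow_ne_top _)
        _ ≤ (5:ℝ≥0∞)^d * t⁻¹ * (t^(1-s) * ∫⁻ x, g x ^ s) := mul_le_mul_right h2 _
        _ = ((5:ℝ≥0∞)^d * ∫⁻ x, g x ^ s) * ((2:ℝ≥0∞)^(-s))^n := harr
    have htend : Tendsto (fun n : ℕ => ((5:ℝ≥0∞)^d * ∫⁻ x, g x ^ s) * ((2:ℝ≥0∞)^(-s))^n)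
        atTop (𝓝 0) := by
      have h1 := ENNReal.tendsto_pow_atTop_nhds_zero_of_lt_one
        (ENNReal.rpow_lt_one_of_one_lt_of_neg (x := 2) (by norm_num) (by linarith : -s < 0))
      have h2 := ENNReal.Tendsto.const_mul (a := (5:ℝ≥0∞)^d * ∫⁻ x, g x ^ s) h1
        (Or.inr (ENNReal.mul_ne_top h5dt hI))
      simpa using h2
    obtain ⟨n, hn⟩ := (htend.eventually_lt_const hpos).exists
    exact absurd (hbound n) (not_le.mpr hn)
  -- the dyadic decomposition of the integral
  have hSmeas : ∀ n : ℤ, MeasurableSet {x | (2:ℝ≥0∞)^((n:ℝ)) < MM d g x} :=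
    fun n => measurableSet_lt measurable_const (MM_measurable hg)
  have main : (∫⁻ x, MM d g x ^ s) ≤
      ∑' n : ℤ, (2:ℝ≥0∞)^(((n:ℝ)+1)*s) * volume {x | (2:ℝ≥0∞)^((n:ℝ)) < MM d g x} := by
    have hae : ∀ᵐ x, MM d g x ≠ ∞ := by
      rw [ae_iff]
      simpa using hfin
    calc ∫⁻ x, MM d g x ^ s
        ≤ ∫⁻ x, ∑' n : ℤ, ({x | (2:ℝ≥0∞)^((n:ℝ)) < MM d g x}.indicator
            (fun _ => (2:ℝ≥0∞)^(((n:ℝ)+1)*s)) x) := by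
          refine lintegral_mono_ae ?_
          filter_upwards [hae] with x hx
          by_cases h0 : MM d g x = 0
          · rw [h0, ENNReal.zero_rpow_of_pos hs0]; exact zero_le
          · obtain ⟨n, hn1, hn2⟩ := exists_dyadic h0 hx
            refine le_trans ?_ (ENNReal.le_tsum n)
            rw [Set.indicator_of_mem (show x ∈ {z | (2:ℝ≥0∞)^((n:ℝ)) < MM d g z} from hn1)]
            calc MM d g x ^ s ≤ ((2:ℝ≥0∞)^((n:ℝ)+1))^s := ENNReal.rpow_le_rpow hn2 hs0.le
              _ = (2:ℝ≥0∞)^(((n:ℝ)+1)*s) := (ENNReal.rpow_mul 2 _ s).symm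
      _ = ∑' n : ℤ, ∫⁻ x, ({x | (2:ℝ≥0∞)^((n:ℝ)) < MM d g x}.indicator
            (fun _ => (2:ℝ≥0∞)^(((n:ℝ)+1)*s)) x) :=
          lintegral_tsum fun n => (measurable_const.indicator (hSmeas n)).aemeasurable
      _ = ∑' n : ℤ, (2:ℝ≥0∞)^(((n:ℝ)+1)*s) * volume {x | (2:ℝ≥0∞)^((n:ℝ)) < MM d g x} := by
          congr 1
          funext n
          exact lintegral_indicator_const (hSmeas n) _
  -- bound each term
  have sum1 : ∀ n : ℤ, (2:ℝ≥0∞)^(((n:ℝ)+1)*s) * volume {x | (2:ℝ≥0∞)^((n:ℝ)) < MM d g x}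
      ≤ (5:ℝ≥0∞)^d * (2:ℝ≥0∞)^(2*s) * ∫⁻ x, (2:ℝ≥0∞)^(((n:ℝ)-1)*(s-1)) *
        ({y | (2:ℝ≥0∞)^((n:ℝ)-1) < g y}.indicator g x) := by
    intro n
    set t : ℝ≥0∞ := (2:ℝ≥0∞)^((n:ℝ)-1) with htdef
    have ht2 : (2:ℝ≥0∞)^((n:ℝ)) = 2 * t := by
      calc (2:ℝ≥0∞)^((n:ℝ)) = (2:ℝ≥0∞)^(1 + ((n:ℝ)-1)) := by
            rw [show 1 + ((n:ℝ)-1) = (n:ℝ) by ring]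
        _ = (2:ℝ≥0∞)^(1:ℝ) * (2:ℝ≥0∞)^((n:ℝ)-1) :=
            ENNReal.rpow_add _ _ (by norm_num) (by norm_num)
        _ = 2 * t := by rw [ENNReal.rpow_one, htdef]
    have harr : (2:ℝ≥0∞)^(((n:ℝ)+1)*s) * t⁻¹ = (2:ℝ≥0∞)^(2*s) * (2:ℝ≥0∞)^(((n:ℝ)-1)*(s-1)) := by
      calc (2:ℝ≥0∞)^(((n:ℝ)+1)*s) * t⁻¹
          = (2:ℝ≥0∞)^(((n:ℝ)+1)*s) * (2:ℝ≥0∞)^(-((n:ℝ)-1)) := by rw [htdef, ← ENNReal.rpow_neg]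
        _ = (2:ℝ≥0∞)^(((n:ℝ)+1)*s + -((n:ℝ)-1)) :=
            (ENNReal.rpow_add _ _ (by norm_num) (by norm_num)).symm
        _ = (2:ℝ≥0∞)^(2*s + ((n:ℝ)-1)*(s-1)) := by
            rw [show ((n:ℝ)+1)*s + -((n:ℝ)-1) = 2*s + ((n:ℝ)-1)*(s-1) by ring]
        _ = (2:ℝ≥0∞)^(2*s) * (2:ℝ≥0∞)^(((n:ℝ)-1)*(s-1)) :=
            ENNReal.rpow_add _ _ (by norm_num) (by norm_num)
    calc (2:ℝ≥0∞)^(((n:ℝ)+1)*s) * volume {x | (2:ℝ≥0∞)^((n:ℝ)) < MM d g x}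
        ≤ (2:ℝ≥0∞)^(((n:ℝ)+1)*s) * ((5:ℝ≥0∞)^d * t⁻¹ *
            ∫⁻ x, ({y | t < g y}.indicator g x)) := by
          rw [ht2]
          exact mul_le_mul_right (key t (two_rpow_ne_zero _) (two_rpow_ne_top _)) _
      _ = ((2:ℝ≥0∞)^(((n:ℝ)+1)*s) * t⁻¹) * ((5:ℝ≥0∞)^d *
            ∫⁻ x, ({y | t < g y}.indicator g x)) := by ring
      _ = (5:ℝ≥0∞)^d * (2:ℝ≥0∞)^(2*s) * ((2:ℝ≥0∞)^(((n:ℝ)-1)*(s-1)) *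
            ∫⁻ x, ({y | t < g y}.indicator g x)) := by rw [harr]; ring
      _ = (5:ℝ≥0∞)^d * (2:ℝ≥0∞)^(2*s) * ∫⁻ x, (2:ℝ≥0∞)^(((n:ℝ)-1)*(s-1)) *
            ({y | (2:ℝ≥0∞)^((n:ℝ)-1) < g y}.indicator g x) := by
          rw [lintegral_const_mul _ (hg.indicator (measurableSet_lt measurable_const hg))]
  -- pointwise sum bound
  have ptwise : ∀ x, (∑' n:ℤ, (2:ℝ≥0∞)^(((n:ℝ)-1)*(s-1)) *
      ({y | (2:ℝ≥0∞)^((n:ℝ)-1) < g y}.indicator g x)) ≤ κ * g x ^ s := by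
    intro x
    by_cases h0 : g x = 0
    · have hzero : ∀ n:ℤ, (2:ℝ≥0∞)^(((n:ℝ)-1)*(s-1)) *
          ({y | (2:ℝ≥0∞)^((n:ℝ)-1) < g y}.indicator g x) = 0 := by
        intro n
        by_cases hx : x ∈ {y | (2:ℝ≥0∞)^((n:ℝ)-1) < g y}
        · exact absurd (mem_setOf_eq ▸ hx) (by rw [h0]; exact not_lt.mpr zero_le)
        · rw [Set.indicator_of_notMem hx, mul_zero]
      rw [tsum_congr hzero]
      simp
    by_cases ht : g x = ∞
    · rw [ht, ENNReal.top_rpow_of_pos hs0, ENNReal.mul_top hκ0]; exact le_top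
    obtain ⟨m, hm1, hm2⟩ := exists_dyadic h0 ht
    have hinj : Function.Injective (fun j : ℕ => m + 1 - (j:ℤ)) := by
      intro a b hab
      simp only at hab
      omega
    have hsupp : Function.support (fun n : ℤ => (2:ℝ≥0∞)^(((n:ℝ)-1)*(s-1)) *
        ({y | (2:ℝ≥0∞)^((n:ℝ)-1) < g y}.indicator g x)) ⊆
        Set.range (fun j : ℕ => m + 1 - (j:ℤ)) := by
      intro n hn
      rw [Function.mem_support] at hn
      by_contra hrange
      have hgt : m + 1 < n := by
        by_contra hle
        push_neg at hle
        exact hrange ⟨(m+1-n).toNat, show m + 1 - (((m+1-n).toNat : ℕ) : ℤ) = n by omega⟩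
      apply hn
      have hnotmem : x ∉ {y | (2:ℝ≥0∞)^((n:ℝ)-1) < g y} := by
        rw [mem_setOf_eq, not_lt]
        refine hm2.trans (ENNReal.rpow_le_rpow_of_exponent_le (by norm_num) ?_)
        have : (m:ℝ) + 2 ≤ (n:ℝ) := by exact_mod_cast by omega
        linarith
      rw [Set.indicator_of_notMem hnotmem, mul_zero]
    rw [← Function.Injective.tsum_eq hinj hsupp]
    have hstep : ∀ j : ℕ, (fun n : ℤ => (2:ℝ≥0∞)^(((n:ℝ)-1)*(s-1)) *
        ({y | (2:ℝ≥0∞)^((n:ℝ)-1) < g y}.indicator g x)) ((fun j : ℕ => m + 1 - (j:ℤ)) j)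
        ≤ ((2:ℝ≥0∞)^((m:ℝ)*(s-1)) * g x) * ((2:ℝ≥0∞)^(-(s-1)))^j := by
      intro j
      simp only
      have he : (((m + 1 - (j:ℤ)):ℤ):ℝ) - 1 = (m:ℝ) - (j:ℝ) := by push_cast; ring
      rw [he]
      have hpow : (2:ℝ≥0∞)^(((m:ℝ)-(j:ℝ))*(s-1)) =
          (2:ℝ≥0∞)^((m:ℝ)*(s-1)) * ((2:ℝ≥0∞)^(-(s-1)))^j := by
        calc (2:ℝ≥0∞)^(((m:ℝ)-(j:ℝ))*(s-1))
            = (2:ℝ≥0∞)^((m:ℝ)*(s-1) + (-(s-1))*(j:ℝ)) := by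
              rw [show ((m:ℝ)-(j:ℝ))*(s-1) = (m:ℝ)*(s-1) + (-(s-1))*(j:ℝ) by ring]
          _ = (2:ℝ≥0∞)^((m:ℝ)*(s-1)) * (2:ℝ≥0∞)^((-(s-1))*(j:ℝ)) :=
              ENNReal.rpow_add _ _ (by norm_num) (by norm_num)
          _ = (2:ℝ≥0∞)^((m:ℝ)*(s-1)) * ((2:ℝ≥0∞)^(-(s-1)))^j := by
              rw [ENNReal.rpow_mul 2 (-(s-1)) (j:ℝ), ENNReal.rpow_natCast]
      rw [hpow]
      calc (2:ℝ≥0∞)^((m:ℝ)*(s-1)) * ((2:ℝ≥0∞)^(-(s-1)))^j *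
          ({y | (2:ℝ≥0∞)^((m:ℝ)-(j:ℝ)) < g y}.indicator g x)
          ≤ (2:ℝ≥0∞)^((m:ℝ)*(s-1)) * ((2:ℝ≥0∞)^(-(s-1)))^j * g x :=
            mul_le_mul_right (Set.indicator_le_self _ _ x) _
        _ = ((2:ℝ≥0∞)^((m:ℝ)*(s-1)) * g x) * ((2:ℝ≥0∞)^(-(s-1)))^j := by ring
    calc (∑' j : ℕ, (fun n : ℤ => (2:ℝ≥0∞)^(((n:ℝ)-1)*(s-1)) *
          ({y | (2:ℝ≥0∞)^((n:ℝ)-1) < g y}.indicator g x)) ((fun j : ℕ => m + 1 - (j:ℤ)) j))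
        ≤ ∑' j : ℕ, ((2:ℝ≥0∞)^((m:ℝ)*(s-1)) * g x) * ((2:ℝ≥0∞)^(-(s-1)))^j :=
          ENNReal.tsum_le_tsum hstep
      _ = ((2:ℝ≥0∞)^((m:ℝ)*(s-1)) * g x) * ∑' j:ℕ, ((2:ℝ≥0∞)^(-(s-1)))^j :=
          ENNReal.tsum_mul_left
      _ = ((2:ℝ≥0∞)^((m:ℝ)*(s-1)) * g x) * κ := by rw [ENNReal.tsum_geometric]
      _ ≤ κ * g x ^ s := by
          rw [mul_comm]
          refine mul_le_mul_right ?_ κ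
          have h1 : (2:ℝ≥0∞)^((m:ℝ)*(s-1)) ≤ g x ^ (s-1) := by
            rw [ENNReal.rpow_mul]
            exact ENNReal.rpow_le_rpow hm1.le (by linarith)
          calc (2:ℝ≥0∞)^((m:ℝ)*(s-1)) * g x ≤ g x ^ (s-1) * g x := mul_le_mul_left h1 _
            _ = g x ^ s := by
                nth_rewrite 2 [← ENNReal.rpow_one (g x)]
                rw [← ENNReal.rpow_add _ _ h0 ht]
                norm_num
  -- final assembly
  have humeas : ∀ n : ℤ, Measurable fun x => (2:ℝ≥0∞)^(((n:ℝ)-1)*(s-1)) *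
      ({y | (2:ℝ≥0∞)^((n:ℝ)-1) < g y}.indicator g x) :=
    fun n => (measurable_const.mul (hg.indicator (measurableSet_lt measurable_const hg)))
  calc ∫⁻ x, MM d g x ^ s
      ≤ ∑' n : ℤ, (2:ℝ≥0∞)^(((n:ℝ)+1)*s) * volume {x | (2:ℝ≥0∞)^((n:ℝ)) < MM d g x} := main
    _ ≤ ∑' n : ℤ, (5:ℝ≥0∞)^d * (2:ℝ≥0∞)^(2*s) * ∫⁻ x, (2:ℝ≥0∞)^(((n:ℝ)-1)*(s-1)) *
          ({y | (2:ℝ≥0∞)^((n:ℝ)-1) < g y}.indicator g x) := ENNReal.tsum_le_tsum sum1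
    _ = (5:ℝ≥0∞)^d * (2:ℝ≥0∞)^(2*s) * ∑' n : ℤ, ∫⁻ x, (2:ℝ≥0∞)^(((n:ℝ)-1)*(s-1)) *
          ({y | (2:ℝ≥0∞)^((n:ℝ)-1) < g y}.indicator g x) := ENNReal.tsum_mul_left
    _ = (5:ℝ≥0∞)^d * (2:ℝ≥0∞)^(2*s) * ∫⁻ x, ∑' n : ℤ, (2:ℝ≥0∞)^(((n:ℝ)-1)*(s-1)) *
          ({y | (2:ℝ≥0∞)^((n:ℝ)-1) < g y}.indicator g x) := by
        rw [lintegral_tsum fun n => (humeas n).aemeasurable]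
    _ ≤ (5:ℝ≥0∞)^d * (2:ℝ≥0∞)^(2*s) * ∫⁻ x, κ * g x ^ s :=
        mul_le_mul_right (lintegral_mono ptwise) _
    _ = (5:ℝ≥0∞)^d * (2:ℝ≥0∞)^(2*s) * (κ * ∫⁻ x, g x ^ s) := by
        rw [lintegral_const_mul _ hgs]
    _ = (5:ℝ≥0∞)^d * (2:ℝ≥0∞)^(2*s) * κ * ∫⁻ x, g x ^ s := by ring


def fl (d : ℕ) (y : Fin d → ℝ) : Fin d → ℤ := fun i => ⌊y i⌋

lemma fl_measurable (d : ℕ) : Measurable (fl d) := by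
  unfold fl; measurability

lemma mem_unitCube_iff {d : ℕ} {k : Fin d → ℤ} {y : Fin d → ℝ} :
    y ∈ unitCube d k ↔ fl d y = k := by
  simp only [unitCube, mem_setOf_eq, fl, funext_iff]
  constructor
  · intro h i
    exact Int.floor_eq_iff.mpr (h i)
  · intro h i
    exact Int.floor_eq_iff.mp (h i)

lemma unitCube_eq_preimage (d : ℕ) (k : Fin d → ℤ) :
    unitCube d k = fl d ⁻¹' {k} := by
  ext y
  simp [mem_unitCube_iff]

lemma unitCube_measurable (d : ℕ) (k : Fin d → ℤ) : MeasurableSet (unitCube d k) := by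
  have : unitCube d k = Set.pi univ (fun i => Ico ((k i : ℝ)) ((k i : ℝ)+1)) := by
    ext y; simp [unitCube, Set.mem_pi, Set.mem_Ico]
  rw [this]
  exact MeasurableSet.univ_pi fun i => measurableSet_Ico

lemma volume_unitCube (d : ℕ) (k : Fin d → ℤ) : volume (unitCube d k) = 1 := by
  have : unitCube d k = Set.pi univ (fun i => Ico ((k i : ℝ)) ((k i : ℝ)+1)) := by
    ext y; simp [unitCube, Set.mem_pi, Set.mem_Ico]
  rw [this, volume_pi_pi]
  simp [Real.volume_Ico]

lemma unitCube_disjoint (d : ℕ) : Pairwise (Function.onFun Disjoint (unitCube d)) := by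
  intro k j hkj
  simp only [Function.onFun, unitCube_eq_preimage]
  exact Disjoint.preimage _ (disjoint_singleton.mpr hkj)

lemma iUnion_unitCube (d : ℕ) : (⋃ k, unitCube d k) = univ := by
  ext y
  simp only [mem_iUnion, mem_univ, iff_true]
  exact ⟨fl d y, mem_unitCube_iff.mpr rfl⟩

lemma lintegral_eq_sum_cubes (d : ℕ) (u : (Fin d → ℝ) → ℝ≥0∞) :
    (∫⁻ y, u y) = ∑' k, ∫⁻ y in unitCube d k, u y := by
  rw [← lintegral_iUnion (unitCube_measurable d) (unitCube_disjoint d) u,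
    iUnion_unitCube, Measure.restrict_univ]

lemma setLIntegral_eq_sum_cubes (d : ℕ) (A : Set (Fin d → ℝ)) (hA : MeasurableSet A)
    (u : (Fin d → ℝ) → ℝ≥0∞) :
    (∫⁻ y in A, u y) = ∑' k, ∫⁻ y in A ∩ unitCube d k, u y := by
  have h1 : A = ⋃ k, A ∩ unitCube d k := by
    rw [← Set.inter_iUnion, iUnion_unitCube, Set.inter_univ]
  have h2 : Pairwise (Function.onFun Disjoint fun k => A ∩ unitCube d k) := fun k j hkj =>
    Disjoint.mono inter_subset_right inter_subset_right (unitCube_disjoint d hkj)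
  conv_lhs => rw [h1]
  exact lintegral_iUnion (fun k => hA.inter (unitCube_measurable d k)) h2 u

/-- Hölder: on a unit cube, the `L¹` norm is bounded by the `L^q` norm. -/
lemma holder_cube {d : ℕ} {qr : ℝ} (hq : 1 < qr) (g : (Fin d → ℝ) → ℝ≥0∞)
    (hg : Measurable g) (k : Fin d → ℤ) :
    (∫⁻ y in unitCube d k, g y) ≤ (∫⁻ y in unitCube d k, g y ^ qr) ^ (1/qr) := by
  have hconj : qr.HolderConjugate (Real.conjExponent qr) := Real.HolderConjugate.conjExponent hq
  have := ENNReal.lintegral_mul_le_Lp_mul_Lq (volume.restrict (unitCube d k)) hconj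
    hg.aemeasurable (aemeasurable_const (b := (1:ℝ≥0∞)))
  simp only [mul_one, Pi.mul_apply] at this
  refine le_trans this (le_of_eq ?_)
  simp only [ENNReal.one_rpow, lintegral_one, Measure.restrict_apply, MeasurableSet.univ,
    univ_inter, volume_unitCube, ENNReal.one_rpow, mul_one]

lemma mem_N_iff {d : ℕ} {k : Fin d → ℤ} {y : Fin d → ℝ} :
    y ∈ fl d ⁻¹' (Set.Icc (k - 2) (k + 2)) ↔ ∀ i, k i - 2 ≤ ⌊y i⌋ ∧ ⌊y i⌋ ≤ k i + 2 := by
  simp only [mem_preimage, Set.mem_Icc, Pi.le_def, fl]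
  constructor
  · intro ⟨h1, h2⟩ i
    have := h1 i; have := h2 i
    simp only [Pi.sub_apply, Pi.add_apply, Pi.ofNat_apply, Nat.cast_ofNat] at *
    constructor <;> omega
  · intro h
    constructor
    · intro i
      have h1 := (h i).1
      simp only [Pi.sub_apply, Pi.ofNat_apply, Nat.cast_ofNat]
      omega
    · intro i
      have h1 := (h i).2
      simp only [Pi.add_apply, Pi.ofNat_apply, Nat.cast_ofNat]
      omega

/-- Far part bound: outside a 5^d neighborhood of the cube, the maximal function of the
remainder at `x ∈ Q_k` is controlled by the maximal function of the block function at
any `z ∈ Q_k`. -/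
lemma far_bound (d : ℕ) {qr : ℝ} (hq : 1 < qr) (g : (Fin d → ℝ) → ℝ≥0∞) (hg : Measurable g)
    (k : Fin d → ℤ) {x z : Fin d → ℝ} (hx : x ∈ unitCube d k) (hz : z ∈ unitCube d k) :
    MM d ((fl d ⁻¹' (Set.Icc (k - 2) (k + 2)))ᶜ.indicator g) x
      ≤ (3:ℝ≥0∞)^d * MM d (fun y => (∫⁻ w in unitCube d (fl d y), g w ^ qr) ^ (1/qr)) z := by
  set N : Set (Fin d → ℝ) := fl d ⁻¹' (Set.Icc (k - 2) (k + 2)) with hN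
  set hh : (Fin d → ℝ) → ℝ≥0∞ := fun y => (∫⁻ w in unitCube d (fl d y), g w ^ qr) ^ (1/qr)
    with hhdef
  refine iSup_le fun r => ?_
  rcases le_or_gt (r:ℝ) 2 with hr2 | hr2
  · -- small radii: the integrand vanishes on the ball
    have hzero : ∀ y ∈ ball x (r:ℝ), (Nᶜ.indicator g) y = 0 := by
      intro y hy
      have hyN : y ∈ N := by
        rw [hN, mem_N_iff]
        intro i
        have h5 : |y i - x i| < 2 := by
          have h6 := dist_le_pi_dist y x i
          rw [Real.dist_eq] at h6
          rw [mem_ball] at hy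
          calc |y i - x i| ≤ dist y x := h6
            _ < (r:ℝ) := hy
            _ ≤ 2 := hr2
        have hxi := hx i
        rw [abs_lt] at h5
        constructor
        · apply Int.le_floor.mpr
          push_cast
          linarith [hxi.1]
        · have : ⌊y i⌋ < k i + 3 := by
            apply Int.floor_lt.mpr
            push_cast
            linarith [hxi.2]
          omega
      exact Set.indicator_of_notMem (Set.notMem_compl_iff.mpr hyN) g
    have : (∫⁻ y in ball x (r:ℝ), (Nᶜ.indicator g) y) = 0 := by
      rw [setLIntegral_congr_fun measurableSet_ball hzero]
      simp
    rw [this, mul_zero]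
    exact zero_le
  · -- large radii
    have hr0 : (0:ℝ) < r := r.2
    have hr30 : (0:ℝ) < (r:ℝ) + 3 := by linarith
    -- per-cube comparison
    have key1 : ∀ j : Fin d → ℤ,
        (∫⁻ y in ball x (r:ℝ) ∩ unitCube d j, (Nᶜ.indicator g) y)
          ≤ ∫⁻ y in ball z ((r:ℝ)+3) ∩ unitCube d j, hh y := by
      intro j
      by_cases hne : (ball x (r:ℝ) ∩ unitCube d j).Nonempty
      · obtain ⟨y₀, hy₀b, hy₀c⟩ := hne
        have hsub : unitCube d j ⊆ ball z ((r:ℝ)+3) := by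
          intro w hw
          rw [mem_ball, dist_pi_lt_iff hr30]
          intro i
          have h1 := hw i
          have h2 := hy₀c i
          have h3 := hz i
          have h4 := hx i
          have h5 : |y₀ i - x i| < (r:ℝ) := by
            have h6 := dist_le_pi_dist y₀ x i
            rw [Real.dist_eq] at h6
            rw [mem_ball] at hy₀b
            linarith [h6.trans_lt hy₀b]
          rw [Real.dist_eq, abs_lt]
          rw [abs_lt] at h5
          constructor <;> [linarith [h1.1, h2.2, h3.2, h4.1]; linarith [h1.2, h2.1, h3.1, h4.2]]
        have hconst : ∀ y ∈ unitCube d j, hh y =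
            (∫⁻ w in unitCube d j, g w ^ qr) ^ (1/qr) := by
          intro y hy
          rw [hhdef]
          simp only
          rw [mem_unitCube_iff.mp hy]
        calc (∫⁻ y in ball x (r:ℝ) ∩ unitCube d j, (Nᶜ.indicator g) y)
            ≤ ∫⁻ y in unitCube d j, g y := by
              refine le_trans (lintegral_mono fun y => Set.indicator_le_self _ _ y) ?_
              exact lintegral_mono' (Measure.restrict_mono inter_subset_right le_rfl) le_rfl
          _ ≤ (∫⁻ w in unitCube d j, g w ^ qr) ^ (1/qr) := holder_cube hq g hg j
          _ = ∫⁻ y in ball z ((r:ℝ)+3) ∩ unitCube d j, hh y := by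
              rw [inter_eq_self_of_subset_right hsub,
                setLIntegral_congr_fun (unitCube_measurable d j) hconst,
                setLIntegral_const, volume_unitCube, mul_one]
      · rw [Set.not_nonempty_iff_eq_empty] at hne
        rw [hne]
        simp
    -- sum over cubes
    have key2 : (∫⁻ y in ball x (r:ℝ), (Nᶜ.indicator g) y)
        ≤ ∫⁻ y in ball z ((r:ℝ)+3), hh y := by
      rw [setLIntegral_eq_sum_cubes d _ measurableSet_ball,
        setLIntegral_eq_sum_cubes d _ measurableSet_ball]
      exact ENNReal.tsum_le_tsum key1
    -- volume comparison
    have hvol : volume (ball z ((r:ℝ)+3)) ≤ (3:ℝ≥0∞)^d * volume (ball x (r:ℝ)) := by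
      rw [vol_ball _ hr30, vol_ball _ hr0]
      calc ENNReal.ofReal ((2*((r:ℝ)+3))^d) ≤ ENNReal.ofReal ((3 * (2*(r:ℝ)))^d) := by
            apply ENNReal.ofReal_le_ofReal
            apply pow_le_pow_left₀ (by linarith)
            linarith
        _ = (3:ℝ≥0∞)^d * ENNReal.ofReal ((2*(r:ℝ))^d) := by
            rw [mul_pow, ENNReal.ofReal_mul (by positivity),
              ENNReal.ofReal_pow (by norm_num : (0:ℝ) ≤ 3)]
            norm_num
    -- combine
    set V := volume (ball x (r:ℝ)) with hV
    set W := volume (ball z ((r:ℝ)+3)) with hW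
    have hV0 : V ≠ 0 := vol_ball_pos x hr0
    have hVt : V ≠ ∞ := vol_ball_ne_top x hr0
    have hW0 : W ≠ 0 := vol_ball_pos z hr30
    have hWt : W ≠ ∞ := vol_ball_ne_top z hr30
    have havg : (∫⁻ y in ball z ((r:ℝ)+3), hh y) ≤ W * MM d hh z := by
      calc (∫⁻ y in ball z ((r:ℝ)+3), hh y)
          = W * (W⁻¹ * ∫⁻ y in ball z ((r:ℝ)+3), hh y) := by
            rw [← mul_assoc, ENNReal.mul_inv_cancel hW0 hWt, one_mul]
        _ ≤ W * MM d hh z := mul_le_mul_right (avg_le_MM hh z hr30) _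
    calc V⁻¹ * (∫⁻ y in ball x (r:ℝ), (Nᶜ.indicator g) y)
        ≤ V⁻¹ * (W * MM d hh z) := mul_le_mul_right (key2.trans havg) _
      _ ≤ V⁻¹ * (((3:ℝ≥0∞)^d * V) * MM d hh z) := by
          gcongr
      _ = (3:ℝ≥0∞)^d * (V⁻¹ * V) * MM d hh z := by ring
      _ = (3:ℝ≥0∞)^d * MM d hh z := by
          rw [ENNReal.inv_mul_cancel hV0 hVt, mul_one]

lemma near_bound (d : ℕ) (u : (Fin d → ℝ) → ℝ≥0∞) (k : Fin d → ℤ) :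
    (∫⁻ y in fl d ⁻¹' (Set.Icc (k - 2) (k + 2)), u y)
      ≤ ∑ m ∈ Finset.Icc (-2 : Fin d → ℤ) 2, ∫⁻ y in unitCube d (k + m), u y := by
  classical
  have h1 : fl d ⁻¹' (Set.Icc (k-2) (k+2)) =
      ⋃ j : ↥(Finset.Icc (k-2) (k+2)), unitCube d (j : Fin d → ℤ) := by
    ext y
    simp only [mem_preimage, Set.mem_iUnion, mem_unitCube_iff, Subtype.exists, exists_prop,
      Finset.mem_Icc, Set.mem_Icc]
    constructor
    · intro h
      exact ⟨fl d y, ⟨h.1, h.2⟩, rfl⟩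
    · rintro ⟨j, hj, rfl⟩
      exact hj
  calc (∫⁻ y in fl d ⁻¹' (Set.Icc (k-2) (k+2)), u y)
      ≤ ∑' j : ↥(Finset.Icc (k-2) (k+2)), ∫⁻ y in unitCube d (j : Fin d → ℤ), u y := by
        rw [h1]
        exact lintegral_iUnion_le _ _
    _ = ∑ j ∈ Finset.Icc (k-2) (k+2), ∫⁻ y in unitCube d j, u y :=
        Finset.tsum_subtype (Finset.Icc (k-2) (k+2)) (fun j => ∫⁻ y in unitCube d j, u y)
    _ = ∑ m ∈ Finset.Icc (-2 : Fin d → ℤ) 2, ∫⁻ y in unitCube d (k + m), u y := by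
        refine Finset.sum_nbij' (fun j => j - k) (fun m => k + m) ?_ ?_ ?_ ?_ ?_
        · intro j hj
          rw [Finset.mem_Icc] at hj ⊢
          refine ⟨fun i => ?_, fun i => ?_⟩ <;> [have h1 := hj.1 i; have h1 := hj.2 i] <;>
            simp only [Pi.sub_apply, Pi.add_apply, Pi.neg_apply, Pi.ofNat_apply,
              Nat.cast_ofNat] at h1 ⊢ <;> omega
        · intro m hm
          rw [Finset.mem_Icc] at hm ⊢
          refine ⟨fun i => ?_, fun i => ?_⟩ <;> [have h1 := hm.1 i; have h1 := hm.2 i] <;>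
            simp only [Pi.sub_apply, Pi.add_apply, Pi.neg_apply, Pi.ofNat_apply,
              Nat.cast_ofNat] at h1 ⊢ <;> omega
        · intro a _
          show k + (a - k) = a
          ring
        · intro a _
          show (k + a) - k = a
          ring
        · intro a _
          show (∫⁻ y in unitCube d a, u y) = ∫⁻ y in unitCube d (k + (a - k)), u y
          rw [show k + (a - k) = a by ring]

lemma ell_add_le (d : ℕ) {pr : ℝ} (h : 1 ≤ pr) (u v : (Fin d → ℤ) → ℝ≥0∞) :
    (∑' k, (u k + v k)^pr)^(1/pr) ≤ (∑' k, (u k)^pr)^(1/pr) + (∑' k, (v k)^pr)^(1/pr) := by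
  have := ENNReal.lintegral_Lp_add_le (μ := (Measure.count : Measure (Fin d → ℤ)))
    (f := u) (g := v) (measurable_of_countable u).aemeasurable
    (measurable_of_countable v).aemeasurable h
  simpa [lintegral_count] using this

lemma ell_zero (d : ℕ) {pr : ℝ} (h : 1 ≤ pr) :
    (∑' _ : Fin d → ℤ, (0:ℝ≥0∞)^pr)^(1/pr) = 0 := by
  rw [ENNReal.zero_rpow_of_pos (by linarith), tsum_zero, ENNReal.zero_rpow_of_pos]
  positivity

lemma ell_finsum_le (d : ℕ) {pr : ℝ} (h : 1 ≤ pr) {ι : Type} [DecidableEq ι] (s : Finset ι)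
    (w : ι → (Fin d → ℤ) → ℝ≥0∞) :
    (∑' k, (∑ m ∈ s, w m k)^pr)^(1/pr) ≤ ∑ m ∈ s, (∑' k, (w m k)^pr)^(1/pr) := by
  induction s using Finset.induction with
  | empty => simpa using (ell_zero d h).le
  | @insert a s hnot ih =>
      simp_rw [Finset.sum_insert hnot]
      exact le_trans (ell_add_le d h _ _) (add_le_add_right ih _)

lemma rpow_finsum_le {t : ℝ} (ht : 0 < t) (ht1 : t ≤ 1) {ι : Type} [DecidableEq ι] (s : Finset ι)
    (c : ι → ℝ≥0∞) : (∑ m ∈ s, c m)^t ≤ ∑ m ∈ s, (c m)^t := by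
  induction s using Finset.induction with
  | empty => simp [ENNReal.zero_rpow_of_pos ht]
  | @insert a s hnot ih =>
      simp_rw [Finset.sum_insert hnot]
      exact le_trans (ENNReal.rpow_add_le_add_rpow _ _ ht.le ht1) (add_le_add_right ih _)

lemma ell_shift (d : ℕ) (m : Fin d → ℤ) (u : (Fin d → ℤ) → ℝ≥0∞) :
    (∑' k, u (k + m)) = ∑' k, u k :=
  (Equiv.addRight m).tsum_eq u

lemma ell_mono (d : ℕ) {pr : ℝ} (h : 0 < pr) {u v : (Fin d → ℤ) → ℝ≥0∞} (huv : ∀ k, u k ≤ v k) :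
    (∑' k, (u k)^pr)^(1/pr) ≤ (∑' k, (v k)^pr)^(1/pr) := by
  apply ENNReal.rpow_le_rpow _ (by positivity)
  exact ENNReal.tsum_le_tsum fun k => ENNReal.rpow_le_rpow (huv k) h.le

lemma ell_const_mul (d : ℕ) {pr : ℝ} (h : 0 < pr) (c : ℝ≥0∞) (u : (Fin d → ℤ) → ℝ≥0∞) :
    (∑' k, (c * u k)^pr)^(1/pr) = c * (∑' k, (u k)^pr)^(1/pr) := by
  have : ∀ k, (c * u k)^pr = c^pr * (u k)^pr := fun k =>
    ENNReal.mul_rpow_of_nonneg _ _ h.le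
  rw [tsum_congr this, ENNReal.tsum_mul_left, ENNReal.mul_rpow_of_nonneg _ _ (by positivity),
    ← ENNReal.rpow_mul, mul_one_div_cancel h.ne', ENNReal.rpow_one]


/-- For `1 < q < ∞` and `1 < p < ∞` the centered Hardy–Littlewood
maximal operator is bounded on the amalgam space `(L^q, ℓ^p)(ℝ^d)`:
`‖𝔐 f‖_{q,p} ≤ C ‖f‖_{q,p}` for all locally integrable `f`. -/
theorem stmt6 (d : ℕ) (q p : ℝ≥0∞) (hq1 : 1 < q) (hq2 : q < ∞) (hp1 : 1 < p) (hp2 : p < ∞) :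
    ∃ C : ℝ, 0 < C ∧ ∀ f : (Fin d → ℝ) → ℂ, LocallyIntegrable f volume →
      amalgamNormE d q p (maximalFn d f) ≤ ENNReal.ofReal C * amalgamNorm d q p f := by
  classical
  have hqr : 1 < q.toReal := by
    rw [show (1:ℝ) = (1:ℝ≥0∞).toReal by simp]
    exact (ENNReal.toReal_lt_toReal (by norm_num) hq2.ne).mpr hq1
  have hpr : 1 < p.toReal := by
    rw [show (1:ℝ) = (1:ℝ≥0∞).toReal by simp]
    exact (ENNReal.toReal_lt_toReal (by norm_num) hp2.ne).mpr hp1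
  set qr := q.toReal with hqrdef
  set pr := p.toReal with hprdef
  have hqr0 : (0:ℝ) < qr := by linarith
  have hpr0 : (0:ℝ) < pr := by linarith
  obtain ⟨Cq, hCq0, hCqt, hCq⟩ := MM_strong d hqr
  obtain ⟨Cp, hCp0, hCpt, hCp⟩ := MM_strong d hpr
  set Box : Finset (Fin d → ℤ) := Finset.Icc (-2) 2 with hBox
  set C0 : ℝ≥0∞ := Cq^(1/qr) * (Box.card : ℝ≥0∞) + (3:ℝ≥0∞)^d * Cp^(1/pr) with hC0
  have hC0t : C0 ≠ ∞ := by
    rw [hC0]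
    apply ENNReal.add_ne_top.mpr
    constructor
    · exact ENNReal.mul_ne_top (ENNReal.rpow_ne_top_of_nonneg (by positivity) hCqt)
        (ENNReal.natCast_ne_top _)
    · exact ENNReal.mul_ne_top (ENNReal.pow_ne_top (by norm_num))
        (ENNReal.rpow_ne_top_of_nonneg (by positivity) hCpt)
  refine ⟨C0.toReal + 1, by positivity, ?_⟩
  intro f hf
  have hC0le : C0 ≤ ENNReal.ofReal (C0.toReal + 1) := by
    calc C0 = ENNReal.ofReal C0.toReal := (ENNReal.ofReal_toReal hC0t).symm
      _ ≤ _ := ENNReal.ofReal_le_ofReal (by linarith)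
  refine le_trans ?_ (mul_le_mul_left hC0le _)
  -- measurable version of the norm function
  have hae : AEMeasurable (fun y => (‖f y‖₊ : ℝ≥0∞)) volume :=
    hf.aestronglyMeasurable.enorm
  set g : (Fin d → ℝ) → ℝ≥0∞ := hae.mk _ with hgdef
  have hg : Measurable g := hae.measurable_mk
  have hgg : (fun y => (‖f y‖₊ : ℝ≥0∞)) =ᵐ[volume] g := hae.ae_eq_mk
  have hMeq : maximalFn d f = MM d g := by
    rw [show maximalFn d f = MM d (fun y => (‖f y‖₊ : ℝ≥0∞)) from rfl]
    exact MM_congr_ae hgg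
  simp only [amalgamNormE, amalgamNorm, ellNorm, setLqNorm, if_neg hp2.ne, if_neg hq2.ne]
  rw [hMeq]
  have hRHSeq : ∀ k : Fin d → ℤ, (∫⁻ x in unitCube d k, (‖f x‖₊ : ℝ≥0∞) ^ qr)
      = ∫⁻ x in unitCube d k, g x ^ qr := fun k =>
    lintegral_congr_ae (ae_restrict_of_ae (hgg.mono fun y hy => by
      show (‖f y‖₊ : ℝ≥0∞) ^ qr = g y ^ qr
      rw [show ((‖f y‖₊ : ℝ≥0∞)) = g y from hy]))
  simp only [← hqrdef, ← hprdef]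
  simp_rw [hRHSeq]
  -- abbreviations
  set b : (Fin d → ℤ) → ℝ≥0∞ := fun k => (∫⁻ x in unitCube d k, g x ^ qr)^(1/qr) with hbdef
  set hh : (Fin d → ℝ) → ℝ≥0∞ := fun y => b (fl d y) with hhdef
  have hhmeas : Measurable hh := (measurable_of_countable b).comp (fl_measurable d)
  set N : (Fin d → ℤ) → Set (Fin d → ℝ) := fun k => fl d ⁻¹' (Set.Icc (k - 2) (k + 2)) with hNdef
  have hNmeas : ∀ k, MeasurableSet (N k) := fun k =>
    (fl_measurable d) ((Set.to_countable _).measurableSet)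
  set T : (Fin d → ℤ) → ℝ≥0∞ :=
    fun k => (∫⁻ x, (MM d ((N k).indicator g) x)^qr)^(1/qr) with hTdef
  set F : (Fin d → ℤ) → ℝ≥0∞ :=
    fun k => (∫⁻ x in unitCube d k, (MM d ((N k)ᶜ.indicator g) x)^qr)^(1/qr) with hFdef
  -- Step 1: pointwise splitting
  have step1 : ∀ k, (∫⁻ x in unitCube d k, (MM d g x)^qr)^(1/qr) ≤ T k + F k := by
    intro k
    have hpt : ∀ x, MM d g x ≤ MM d ((N k).indicator g) x + MM d ((N k)ᶜ.indicator g) x := by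
      intro x
      have h1 : MM d g x = MM d (fun y => (N k).indicator g y + (N k)ᶜ.indicator g y) x := by
        congr 1
        funext y
        exact (congrFun (Set.indicator_self_add_compl (N k) g) y).symm
      rw [h1]
      exact MM_add_le (hg.indicator (hNmeas k)) x
    calc (∫⁻ x in unitCube d k, (MM d g x)^qr)^(1/qr)
        ≤ (∫⁻ x in unitCube d k,
            ((MM d ((N k).indicator g) x) + (MM d ((N k)ᶜ.indicator g) x))^qr)^(1/qr) := by
          apply ENNReal.rpow_le_rpow _ (by positivity)
          refine lintegral_mono fun x => ENNReal.rpow_le_rpow (hpt x) hqr0.le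
      _ ≤ (∫⁻ x in unitCube d k, (MM d ((N k).indicator g) x)^qr)^(1/qr)
          + (∫⁻ x in unitCube d k, (MM d ((N k)ᶜ.indicator g) x)^qr)^(1/qr) := by
          have := ENNReal.lintegral_Lp_add_le (μ := volume.restrict (unitCube d k))
            (f := fun x => MM d ((N k).indicator g) x)
            (g := fun x => MM d ((N k)ᶜ.indicator g) x)
            (MM_measurable (hg.indicator (hNmeas k))).aemeasurable
            (MM_measurable (hg.indicator (hNmeas k).compl)).aemeasurable hqr.le
          exact this
      _ ≤ T k + F k := by
          gcongr
          apply ENNReal.rpow_le_rpow _ (by positivity)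
          exact lintegral_mono' Measure.restrict_le_self le_rfl
  -- Step 2: near part
  have step2 : ∀ k, T k ≤ Cq^(1/qr) * ∑ m ∈ Box, b (k+m) := by
    intro k
    have hind : (∫⁻ x, ((N k).indicator g x)^qr) = ∫⁻ x in N k, g x ^ qr := by
      have : ∀ x, ((N k).indicator g x)^qr = (N k).indicator (fun w => g w ^ qr) x := by
        intro x
        by_cases hx : x ∈ N k
        · rw [Set.indicator_of_mem hx, Set.indicator_of_mem hx]
        · rw [Set.indicator_of_notMem hx, Set.indicator_of_notMem hx,
            ENNReal.zero_rpow_of_pos hqr0]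
      rw [lintegral_congr this, lintegral_indicator (hNmeas k)]
    have h2 : (∫⁻ x, (MM d ((N k).indicator g) x)^qr) ≤ Cq * ∑ m ∈ Box, (b (k+m))^qr := by
      calc (∫⁻ x, (MM d ((N k).indicator g) x)^qr)
          ≤ Cq * ∫⁻ x, ((N k).indicator g x)^qr := hCq _ (hg.indicator (hNmeas k))
        _ = Cq * ∫⁻ x in N k, g x ^ qr := by rw [hind]
        _ ≤ Cq * ∑ m ∈ Box, ∫⁻ x in unitCube d (k+m), g x ^ qr :=
            mul_le_mul_right (near_bound d _ k) _
        _ = Cq * ∑ m ∈ Box, (b (k+m))^qr := by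
            congr 1
            refine Finset.sum_congr rfl fun m _ => ?_
            rw [hbdef]
            simp only
            rw [← ENNReal.rpow_mul, one_div_mul_cancel hqr0.ne', ENNReal.rpow_one]
    calc T k ≤ (Cq * ∑ m ∈ Box, (b (k+m))^qr)^(1/qr) :=
          ENNReal.rpow_le_rpow h2 (by positivity)
      _ = Cq^(1/qr) * (∑ m ∈ Box, (b (k+m))^qr)^(1/qr) :=
          ENNReal.mul_rpow_of_nonneg _ _ (by positivity)
      _ ≤ Cq^(1/qr) * ∑ m ∈ Box, ((b (k+m))^qr)^(1/qr) := by
          refine mul_le_mul_right ?_ _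
          exact rpow_finsum_le (by positivity) (by
            rw [div_le_one hqr0]; linarith) Box _
      _ = Cq^(1/qr) * ∑ m ∈ Box, b (k+m) := by
          congr 1
          refine Finset.sum_congr rfl fun m _ => ?_
          rw [← ENNReal.rpow_mul, mul_one_div_cancel hqr0.ne', ENNReal.rpow_one]
  -- Step 3: far part, pointwise in the cube
  have step3 : ∀ k, (F k)^pr ≤ ((3:ℝ≥0∞)^d)^pr * ∫⁻ z in unitCube d k, (MM d hh z)^pr := by
    intro k
    have hFz : ∀ z ∈ unitCube d k, F k ≤ (3:ℝ≥0∞)^d * MM d hh z := by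
      intro z hz
      have h1 : (∫⁻ x in unitCube d k, (MM d ((N k)ᶜ.indicator g) x)^qr)
          ≤ ((3:ℝ≥0∞)^d * MM d hh z)^qr := by
        calc (∫⁻ x in unitCube d k, (MM d ((N k)ᶜ.indicator g) x)^qr)
            ≤ ∫⁻ _ in unitCube d k, ((3:ℝ≥0∞)^d * MM d hh z)^qr := by
              refine setLIntegral_mono measurable_const fun x hx => ?_
              exact ENNReal.rpow_le_rpow (far_bound d hqr g hg k hx hz) hqr0.le
          _ = ((3:ℝ≥0∞)^d * MM d hh z)^qr := by
              rw [setLIntegral_const, volume_unitCube, mul_one]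
      calc F k ≤ (((3:ℝ≥0∞)^d * MM d hh z)^qr)^(1/qr) :=
            ENNReal.rpow_le_rpow h1 (by positivity)
        _ = (3:ℝ≥0∞)^d * MM d hh z := by
            rw [← ENNReal.rpow_mul, mul_one_div_cancel hqr0.ne', ENNReal.rpow_one]
    calc (F k)^pr = ∫⁻ _ in unitCube d k, (F k)^pr := by
          rw [setLIntegral_const, volume_unitCube, mul_one]
      _ ≤ ∫⁻ z in unitCube d k, ((3:ℝ≥0∞)^d * MM d hh z)^pr := by
          refine setLIntegral_mono ((by fun_prop : Measurable fun w : ℝ≥0∞ => w ^ pr).comp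
            ((MM_measurable hhmeas).const_mul _)) fun z hz => ?_
          exact ENNReal.rpow_le_rpow (hFz z hz) hpr0.le
      _ = ((3:ℝ≥0∞)^d)^pr * ∫⁻ z in unitCube d k, (MM d hh z)^pr := by
          have : ∀ z, ((3:ℝ≥0∞)^d * MM d hh z)^pr
              = ((3:ℝ≥0∞)^d)^pr * (MM d hh z)^pr := fun z =>
            ENNReal.mul_rpow_of_nonneg _ _ hpr0.le
          rw [lintegral_congr fun z => this z]
          exact lintegral_const_mul _ ((by fun_prop : Measurable fun w : ℝ≥0∞ => w ^ pr).comp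
            (MM_measurable hhmeas))
  -- Step 4: sum the far part
  have step4 : (∑' k, (F k)^pr) ≤ ((3:ℝ≥0∞)^d)^pr * Cp * ∑' k, (b k)^pr := by
    have hhpr : ∀ k, (∫⁻ y in unitCube d k, hh y ^ pr) = (b k)^pr := by
      intro k
      have : ∀ y ∈ unitCube d k, hh y ^ pr = (b k)^pr := by
        intro y hy
        rw [hhdef]
        simp only
        rw [mem_unitCube_iff.mp hy]
      rw [setLIntegral_congr_fun (unitCube_measurable d k) this,
        setLIntegral_const, volume_unitCube, mul_one]
    calc (∑' k, (F k)^pr)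
        ≤ ∑' k, ((3:ℝ≥0∞)^d)^pr * ∫⁻ z in unitCube d k, (MM d hh z)^pr :=
          ENNReal.tsum_le_tsum step3
      _ = ((3:ℝ≥0∞)^d)^pr * ∑' k, ∫⁻ z in unitCube d k, (MM d hh z)^pr :=
          ENNReal.tsum_mul_left
      _ = ((3:ℝ≥0∞)^d)^pr * ∫⁻ z, (MM d hh z)^pr := by
          rw [← lintegral_eq_sum_cubes]
      _ ≤ ((3:ℝ≥0∞)^d)^pr * (Cp * ∫⁻ z, hh z ^ pr) :=
          mul_le_mul_right (hCp hh hhmeas) _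
      _ = ((3:ℝ≥0∞)^d)^pr * Cp * ∑' k, (b k)^pr := by
          rw [lintegral_eq_sum_cubes d (fun z => hh z ^ pr), tsum_congr hhpr, mul_assoc]
  -- Assemble
  calc (∑' k, ((∫⁻ x in unitCube d k, (MM d g x)^qr)^(1/qr))^pr)^(1/pr)
      ≤ (∑' k, (T k + F k)^pr)^(1/pr) := ell_mono d hpr0 step1
    _ ≤ (∑' k, (T k)^pr)^(1/pr) + (∑' k, (F k)^pr)^(1/pr) := ell_add_le d hpr.le T F
    _ ≤ Cq^(1/qr) * (Box.card : ℝ≥0∞) * (∑' k, (b k)^pr)^(1/pr)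
        + (3:ℝ≥0∞)^d * Cp^(1/pr) * (∑' k, (b k)^pr)^(1/pr) := by
        gcongr
        · -- near part ℓ^p bound
          calc (∑' k, (T k)^pr)^(1/pr)
              ≤ (∑' k, (Cq^(1/qr) * ∑ m ∈ Box, b (k+m))^pr)^(1/pr) := ell_mono d hpr0 step2
            _ = Cq^(1/qr) * (∑' k, (∑ m ∈ Box, b (k+m))^pr)^(1/pr) :=
                ell_const_mul d hpr0 _ _
            _ ≤ Cq^(1/qr) * ∑ m ∈ Box, (∑' k, (b (k+m))^pr)^(1/pr) :=
                mul_le_mul_right (ell_finsum_le d hpr.le Box fun m k => b (k+m)) _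
            _ = Cq^(1/qr) * ∑ m ∈ Box, (∑' k, (b k)^pr)^(1/pr) := by
                congr 1
                refine Finset.sum_congr rfl fun m _ => ?_
                rw [ell_shift d m (fun k => (b k)^pr)]
            _ = Cq^(1/qr) * (Box.card : ℝ≥0∞) * (∑' k, (b k)^pr)^(1/pr) := by
                rw [Finset.sum_const, nsmul_eq_mul, mul_assoc]
        · -- far part ℓ^p bound
          calc (∑' k, (F k)^pr)^(1/pr)
              ≤ (((3:ℝ≥0∞)^d)^pr * Cp * ∑' k, (b k)^pr)^(1/pr) :=
                ENNReal.rpow_le_rpow step4 (by positivity)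
            _ = (3:ℝ≥0∞)^d * Cp^(1/pr) * (∑' k, (b k)^pr)^(1/pr) := by
                rw [ENNReal.mul_rpow_of_nonneg _ _ (by positivity),
                  ENNReal.mul_rpow_of_nonneg _ _ (by positivity),
                  ← ENNReal.rpow_mul, mul_one_div_cancel hpr0.ne', ENNReal.rpow_one]
    _ = C0 * (∑' k, (b k)^pr)^(1/pr) := by
        rw [hC0, add_mul]

end
end

section
/- Let f be a tempered distribution on ℝ^d whose grand maximal function M_{𝓕_N}(f) belongs to (L^q, ℓ^p) for some 0 < q, p < ∞ and N ∈ ℕ. Then f is a bounded distribution: for every Φ ∈ 𝒮(ℝ^d), the function f ∗ Φ is bounded, with sup_x |(f ∗ Φ)(x)| ≤ C(d,q,p)·𝔑_N(Φ)·‖M_{𝓕_N}(f)‖_{q,p}. -/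
open MeasureTheory Metric Set Filter
open scoped ENNReal NNReal

noncomputable section

section ShiftDilate

variable {D : Type*} [NormedAddCommGroup D] [NormedSpace ℝ D]

lemma affine_hasFDerivAt (b : D) (s : ℝ) (y : D) :
    HasFDerivAt (fun y : D => b + s • y) (s • ContinuousLinearMap.id ℝ D) y := by
  have h : HasFDerivAt (fun y : D => s • y) (s • ContinuousLinearMap.id ℝ D) y :=
    (hasFDerivAt_id y).const_smul s
  exact h.const_add b

lemma affine_hasTemperateGrowth (b : D) (s : ℝ) :
    Function.HasTemperateGrowth (fun y : D => b + s • y) := by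
  apply Function.HasTemperateGrowth.of_fderiv (k := 1) (C := ‖b‖ + |s|)
  · have h : (fderiv ℝ fun y : D => b + s • y) = fun _ => s • ContinuousLinearMap.id ℝ D :=
      funext fun y => (affine_hasFDerivAt b s y).fderiv
    rw [h]
    exact Function.HasTemperateGrowth.const _
  · exact fun y => (affine_hasFDerivAt b s y).differentiableAt
  · intro y
    have h1 : ‖b + s • y‖ ≤ ‖b‖ + |s| * ‖y‖ := by
      refine (norm_add_le _ _).trans ?_
      rw [norm_smul, Real.norm_eq_abs]
    have h2 : (0:ℝ) ≤ |s| := abs_nonneg s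
    have h3 : (0:ℝ) ≤ ‖y‖ := norm_nonneg y
    have h4 : (0:ℝ) ≤ ‖b‖ := norm_nonneg b
    calc ‖b + s • y‖ ≤ ‖b‖ + |s| * ‖y‖ := h1
      _ ≤ (‖b‖ + |s|) * (1 + ‖y‖) ^ 1 := by nlinarith

lemma affine_antilipschitz (b : D) {s : ℝ} (hs : s ≠ 0) :
    AntilipschitzWith (‖s‖₊⁻¹) (fun y : D => b + s • y) := by
  refine antilipschitzWith_iff_le_mul_dist.2 fun x y => ?_
  have h : dist (b + s • x) (b + s • y) = |s| * dist x y := by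
    rw [dist_add_left, dist_smul₀, Real.norm_eq_abs]
  rw [h]
  have hco : ((‖s‖₊⁻¹ : ℝ≥0) : ℝ) = |s|⁻¹ := by
    rw [NNReal.coe_inv, coe_nnnorm, Real.norm_eq_abs]
  rw [hco, ← mul_assoc, inv_mul_cancel₀ (abs_ne_zero.2 hs), one_mul]

end ShiftDilate

/-- The Schwartz function `y ↦ t^{-d} φ(t⁻¹ • (x - y))`, i.e. `y ↦ φ_t(x - y)`
(defined to be `0` for `t = 0`). -/
def shiftDilate (d : ℕ) (φ : SchwartzMap (Fin d → ℝ) ℂ) (x : Fin d → ℝ) (t : ℝ) :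
    SchwartzMap (Fin d → ℝ) ℂ :=
  if ht : t = 0 then 0
  else ((t ^ d : ℝ))⁻¹ • SchwartzMap.compCLMOfAntilipschitz (𝕜 := ℝ)
    (affine_hasTemperateGrowth (t⁻¹ • x) (-t⁻¹))
    (affine_antilipschitz (t⁻¹ • x) (neg_ne_zero.2 (inv_ne_zero ht))) φ

/-- The convolution `(T ∗ φ_t)(x) = T (y ↦ φ_t(x - y))` of a distribution `T` with the
dilated test function `φ_t`. -/
def sconv (d : ℕ) (T : SchwartzMap (Fin d → ℝ) ℂ → ℂ) (φ : SchwartzMap (Fin d → ℝ) ℂ)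
    (t : ℝ) (x : Fin d → ℝ) : ℂ :=
  T (shiftDilate d φ x t)

/-- The local maximal function `M_loc(T)(x) = sup_{0 < t ≤ 1} |(T ∗ φ_t)(x)|`. -/
def sMloc (d : ℕ) (φ : SchwartzMap (Fin d → ℝ) ℂ) (T : SchwartzMap (Fin d → ℝ) ℂ → ℂ)
    (x : Fin d → ℝ) : ℝ≥0∞ :=
  ⨆ t : {t : ℝ // 0 < t ∧ t ≤ 1}, (‖sconv d T φ (t : ℝ) x‖₊ : ℝ≥0∞)

/-- The (global) maximal function `M(T)(x) = sup_{t > 0} |(T ∗ φ_t)(x)|`. -/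
def sMglob (d : ℕ) (φ : SchwartzMap (Fin d → ℝ) ℂ) (T : SchwartzMap (Fin d → ℝ) ℂ → ℂ)
    (x : Fin d → ℝ) : ℝ≥0∞ :=
  ⨆ t : {t : ℝ // 0 < t}, (‖sconv d T φ (t : ℝ) x‖₊ : ℝ≥0∞)

/-- The local Hardy-amalgam quasi-norm `‖T‖_{𝓗_loc^{(q,p)}} = ‖M_loc T‖_{q,p}`. -/
def hlocNorm (d : ℕ) (q p : ℝ≥0∞) (φ : SchwartzMap (Fin d → ℝ) ℂ)
    (T : SchwartzMap (Fin d → ℝ) ℂ → ℂ) : ℝ≥0∞ :=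
  amalgamNormE d q p (sMloc d φ T)

/-- The Hardy-amalgam quasi-norm `‖T‖_{𝓗^{(q,p)}} = ‖M T‖_{q,p}`. -/
def hNorm (d : ℕ) (q p : ℝ≥0∞) (φ : SchwartzMap (Fin d → ℝ) ℂ)
    (T : SchwartzMap (Fin d → ℝ) ℂ → ℂ) : ℝ≥0∞ :=
  amalgamNormE d q p (sMglob d φ T)

/-- The distribution induced by a function `g`, via the pairing `θ ↦ ∫ g θ`. -/
def pairD (d : ℕ) (g : (Fin d → ℝ) → ℂ) : SchwartzMap (Fin d → ℝ) ℂ → ℂ :=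
  fun θ => ∫ x, g x * θ x

/-- The norm `𝔑_N(ψ) = ∫ (1+|x|)^N ∑_{|α| ≤ N+1} |∂^α ψ(x)| dx`, encoded via iterated
Fréchet derivatives. -/
def frakN (d N : ℕ) (ψ : (Fin d → ℝ) → ℂ) : ℝ :=
  ∫ x : Fin d → ℝ, (1 + ‖x‖) ^ N * ∑ i ∈ Finset.range (N + 2), ‖iteratedFDeriv ℝ i ψ x‖

/-- The nontangential grand maximal function
`M_{𝓕_N}(T)(x) = sup_{ψ ∈ 𝓕_N} sup_{t > 0} sup_{|x-y| ≤ t} |(T ∗ ψ_t)(y)|`. -/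
def grandMaxNT (d N : ℕ) (T : SchwartzMap (Fin d → ℝ) ℂ → ℂ) (x : Fin d → ℝ) : ℝ≥0∞ :=
  ⨆ (ψ : {ψ : SchwartzMap (Fin d → ℝ) ℂ // frakN d N ⇑ψ ≤ 1}) (t : {t : ℝ // 0 < t})
    (y : {y : Fin d → ℝ // ‖x - y‖ ≤ (t : ℝ)}),
      (‖sconv d T (ψ : SchwartzMap (Fin d → ℝ) ℂ) (t : ℝ) (y : Fin d → ℝ)‖₊ : ℝ≥0∞)

/-- The local radial grand maximal function
`M_loc^0(T)(x) = sup_{ψ ∈ 𝓕_N} sup_{0 < t ≤ 1} |(T ∗ ψ_t)(x)|`. -/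
def grandMaxLoc (d N : ℕ) (T : SchwartzMap (Fin d → ℝ) ℂ → ℂ) (x : Fin d → ℝ) : ℝ≥0∞ :=
  ⨆ (ψ : {ψ : SchwartzMap (Fin d → ℝ) ℂ // frakN d N ⇑ψ ≤ 1})
    (t : {t : ℝ // 0 < t ∧ t ≤ 1}),
      (‖sconv d T (ψ : SchwartzMap (Fin d → ℝ) ℂ) (t : ℝ) x‖₊ : ℝ≥0∞)

lemma frakN_integrable (d N : ℕ) (Φ : SchwartzMap (Fin d → ℝ) ℂ) :
    MeasureTheory.Integrable (fun x : Fin d → ℝ =>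
      (1 + ‖x‖) ^ N * ∑ i ∈ Finset.range (N + 2), ‖iteratedFDeriv ℝ i ⇑Φ x‖) := by
  have key : ∀ i : ℕ, MeasureTheory.Integrable
      (fun x : Fin d → ℝ => (1 + ‖x‖) ^ N * ‖iteratedFDeriv ℝ i ⇑Φ x‖) := by
    intro i
    have h := fun j : ℕ => SchwartzMap.integrable_pow_mul_iteratedFDeriv
      (volume : Measure (Fin d → ℝ)) Φ j i
    have heq : (fun x : Fin d → ℝ => (1 + ‖x‖) ^ N * ‖iteratedFDeriv ℝ i ⇑Φ x‖)
        = fun x => ∑ j ∈ Finset.range (N + 1),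
            ((N.choose j : ℝ)) * (‖x‖ ^ (N - j) * ‖iteratedFDeriv ℝ i ⇑Φ x‖) := by
      funext x
      rw [add_pow, Finset.sum_mul]
      refine Finset.sum_congr rfl fun j _ => ?_
      ring
    rw [heq]
    exact MeasureTheory.integrable_finset_sum _ fun j _ => ((h (N - j)).const_mul _)
  have heq : (fun x : Fin d → ℝ =>
      (1 + ‖x‖) ^ N * ∑ i ∈ Finset.range (N + 2), ‖iteratedFDeriv ℝ i ⇑Φ x‖)
      = fun x => ∑ i ∈ Finset.range (N + 2), (1 + ‖x‖) ^ N * ‖iteratedFDeriv ℝ i ⇑Φ x‖ := by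
    funext x; exact Finset.mul_sum _ _ _
  rw [heq]
  exact MeasureTheory.integrable_finset_sum _ fun i _ => key i

lemma frakN_nonneg (d N : ℕ) (Φ : SchwartzMap (Fin d → ℝ) ℂ) : 0 ≤ frakN d N ⇑Φ := by
  refine MeasureTheory.integral_nonneg fun x => ?_
  have h1 : (0:ℝ) ≤ (1 + ‖x‖) ^ N := by positivity
  exact mul_nonneg h1 (Finset.sum_nonneg fun i _ => norm_nonneg _)

lemma frakN_pos (d N : ℕ) (Φ : SchwartzMap (Fin d → ℝ) ℂ) (hΦ : Φ ≠ 0) :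
    0 < frakN d N ⇑Φ := by
  rcases (frakN_nonneg d N Φ).lt_or_eq with h | h
  · exact h
  exfalso
  set F : (Fin d → ℝ) → ℝ :=
    fun x => (1 + ‖x‖) ^ N * ∑ i ∈ Finset.range (N + 2), ‖iteratedFDeriv ℝ i ⇑Φ x‖ with hF
  have hnn : 0 ≤ F := fun x => by
    have h1 : (0:ℝ) ≤ (1 + ‖x‖) ^ N := by positivity
    exact mul_nonneg h1 (Finset.sum_nonneg fun i _ => norm_nonneg _)
  have h0 : F =ᵐ[volume] 0 :=
    (MeasureTheory.integral_eq_zero_iff_of_nonneg hnn (frakN_integrable d N Φ)).1 h.symm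
  have hcont : Continuous F := by
    refine Continuous.mul ((continuous_const.add continuous_norm).pow N) ?_
    exact continuous_finset_sum _ fun i _ =>
      ((Φ.smooth ⊤).continuous_iteratedFDeriv (mod_cast le_top)).norm
  have hFeq : F = 0 := (hcont.ae_eq_iff_eq volume continuous_const).1 h0
  apply hΦ
  ext x
  have hx : F x = 0 := congrFun hFeq x
  have h1 : (0:ℝ) < (1 + ‖x‖) ^ N := by positivity
  have h2 : ∑ i ∈ Finset.range (N + 2), ‖iteratedFDeriv ℝ i ⇑Φ x‖ = 0 := by
    rcases mul_eq_zero.1 hx with h' | h'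
    · exact absurd h' h1.ne'
    · exact h'
  have h3 : ‖iteratedFDeriv ℝ 0 ⇑Φ x‖ = 0 :=
    (Finset.sum_eq_zero_iff_of_nonneg fun i _ => norm_nonneg _).1 h2 0 (by simp)
  rw [norm_iteratedFDeriv_zero, norm_eq_zero] at h3
  simpa using h3

lemma frakN_smul (d N : ℕ) (c : ℝ) (Φ : SchwartzMap (Fin d → ℝ) ℂ) :
    frakN d N ⇑(c • Φ) = |c| * frakN d N ⇑Φ := by
  rw [frakN, frakN, ← MeasureTheory.integral_const_mul]
  congr 1
  funext x
  have hs : ∀ i : ℕ, ‖iteratedFDeriv ℝ i ⇑(c • Φ) x‖ = |c| * ‖iteratedFDeriv ℝ i ⇑Φ x‖ := by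
    intro i
    have h1 : ⇑(c • Φ) = c • ⇑Φ := rfl
    rw [h1, iteratedFDeriv_const_smul_apply (Φ.smooth _).contDiffAt]
    rw [norm_smul c (iteratedFDeriv ℝ i ⇑Φ x), Real.norm_eq_abs]
  simp only [hs]
  rw [← Finset.mul_sum]
  ring

lemma shiftDilate_smul (d : ℕ) (c : ℝ) (Φ : SchwartzMap (Fin d → ℝ) ℂ) (x : Fin d → ℝ) :
    shiftDilate d (c • Φ) x 1 = c • shiftDilate d Φ x 1 := by
  rw [shiftDilate, shiftDilate, dif_neg one_ne_zero, dif_neg one_ne_zero, _root_.map_smul, smul_comm]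

lemma sconv_smul (d : ℕ) (T : SchwartzMap (Fin d → ℝ) ℂ →L[ℂ] ℂ) (c : ℝ)
    (Φ : SchwartzMap (Fin d → ℝ) ℂ) (x : Fin d → ℝ) :
    sconv d ⇑T (c • Φ) 1 x = c • sconv d ⇑T Φ 1 x := by
  rw [sconv, sconv, shiftDilate_smul, T.map_smul_of_tower]

lemma point_le_grandMax (d N : ℕ) (T : SchwartzMap (Fin d → ℝ) ℂ → ℂ)
    (ψ : SchwartzMap (Fin d → ℝ) ℂ) (hψ : frakN d N ⇑ψ ≤ 1) {x y : Fin d → ℝ}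
    (hxy : ‖y - x‖ ≤ 1) :
    (‖sconv d T ψ 1 x‖₊ : ℝ≥0∞) ≤ grandMaxNT d N T y := by
  refine le_iSup_of_le ⟨ψ, hψ⟩ ?_
  refine le_iSup_of_le ⟨1, one_pos⟩ ?_
  exact le_iSup_of_le (⟨x, hxy⟩ : {z : Fin d → ℝ // ‖y - z‖ ≤ (1:ℝ)}) le_rfl

lemma unitCube_eq (d : ℕ) (k : Fin d → ℤ) :
    unitCube d k = Set.pi Set.univ (fun i => Set.Ico ((k i : ℝ)) ((k i : ℝ) + 1)) := by
  ext y; simp [unitCube, Set.mem_pi, Set.mem_Ico]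

lemma le_amalgamNormE (d : ℕ) {q p : ℝ≥0∞} (hq0 : 0 < q) (hq : q ≠ ∞) (hp0 : 0 < p)
    (hp : p ≠ ∞) (g : (Fin d → ℝ) → ℝ≥0∞) (a : ℝ≥0∞) (k : Fin d → ℤ)
    (h : ∀ y ∈ unitCube d k, a ≤ g y) : a ≤ amalgamNormE d q p g := by
  have hqr : 0 < q.toReal := ENNReal.toReal_pos hq0.ne' hq
  have hpr : 0 < p.toReal := ENNReal.toReal_pos hp0.ne' hp
  have hmeas : MeasurableSet (unitCube d k) := by
    rw [unitCube_eq]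
    exact MeasurableSet.univ_pi fun i => measurableSet_Ico
  have hvol : volume (unitCube d k) = 1 := by
    rw [unitCube_eq, volume_pi_pi]
    simp [Real.volume_Ico]
  have h1 : a ≤ setLqNorm q g (unitCube d k) := by
    rw [setLqNorm, if_neg hq]
    have hle : a ^ q.toReal * volume (unitCube d k) ≤ ∫⁻ x in unitCube d k, g x ^ q.toReal := by
      rw [← MeasureTheory.setLIntegral_const]
      refine MeasureTheory.lintegral_mono_ae ?_
      exact (MeasureTheory.ae_restrict_iff' hmeas).2 (Filter.Eventually.of_forall
        fun y hy => ENNReal.rpow_le_rpow (h y hy) hqr.le)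
    rw [hvol, mul_one] at hle
    calc a = (a ^ q.toReal) ^ (1 / q.toReal) := by
            rw [← ENNReal.rpow_mul, mul_one_div_cancel hqr.ne', ENNReal.rpow_one]
      _ ≤ _ := ENNReal.rpow_le_rpow hle (by positivity)
  refine h1.trans ?_
  rw [amalgamNormE, ellNorm, if_neg hp]
  calc setLqNorm q g (unitCube d k)
      = ((setLqNorm q g (unitCube d k)) ^ p.toReal) ^ (1 / p.toReal) := by
        rw [← ENNReal.rpow_mul, mul_one_div_cancel hpr.ne', ENNReal.rpow_one]
    _ ≤ _ := ENNReal.rpow_le_rpow (ENNReal.le_tsum k) (by positivity)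

/-- If `f` is a tempered distribution on `ℝ^d` whose nontangential
grand maximal function `M_{𝓕_N}(f)` belongs to `(L^q, ℓ^p)` (`0 < q, p < ∞`), then `f`
is a bounded distribution: for every Schwartz `Φ`, the function `f ∗ Φ` is bounded with
`sup_x |(f ∗ Φ)(x)| ≤ C(d,q,p) 𝔑_N(Φ) ‖M_{𝓕_N}(f)‖_{q,p}`. -/
theorem stmt10 (d N : ℕ) (q p : ℝ≥0∞) (hq0 : 0 < q) (hq : q ≠ ∞) (hp0 : 0 < p)
    (hp : p ≠ ∞) :
    ∃ C : ℝ, 0 < C ∧ ∀ T : SchwartzMap (Fin d → ℝ) ℂ →L[ℂ] ℂ,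
      amalgamNormE d q p (grandMaxNT d N ⇑T) ≠ ∞ →
      ∀ (Φ : SchwartzMap (Fin d → ℝ) ℂ) (x : Fin d → ℝ),
        (‖sconv d ⇑T Φ 1 x‖₊ : ℝ≥0∞) ≤
          ENNReal.ofReal (C * frakN d N ⇑Φ) * amalgamNormE d q p (grandMaxNT d N ⇑T) := by
  refine ⟨1, one_pos, fun T hT Φ x => ?_⟩
  by_cases hΦ : Φ = 0
  · subst hΦ
    have h0 : sconv d ⇑T 0 1 x = 0 := by
      rw [sconv, shiftDilate, dif_neg one_ne_zero]
      simp
    rw [h0]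
    simp
  · set c := frakN d N ⇑Φ with hc
    have hcpos : 0 < c := frakN_pos d N Φ hΦ
    set ψ := c⁻¹ • Φ with hψdef
    have hψ1 : frakN d N ⇑ψ ≤ 1 := by
      rw [hψdef, frakN_smul, abs_of_pos (inv_pos.2 hcpos), ← hc, inv_mul_cancel₀ hcpos.ne']
    have hΦψ : Φ = c • ψ := by
      rw [hψdef, smul_smul, mul_inv_cancel₀ hcpos.ne', one_smul]
    have hnorm : (‖sconv d ⇑T Φ 1 x‖₊ : ℝ≥0∞)
        = ENNReal.ofReal c * (‖sconv d ⇑T ψ 1 x‖₊ : ℝ≥0∞) := by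
      rw [hΦψ, sconv_smul, nnnorm_smul, ENNReal.coe_mul, ← enorm_eq_nnnorm, Real.enorm_eq_ofReal hcpos.le]
    have hmem : ∀ y ∈ unitCube d (fun i => ⌊x i⌋),
        (‖sconv d ⇑T ψ 1 x‖₊ : ℝ≥0∞) ≤ grandMaxNT d N ⇑T y := by
      intro y hy
      refine point_le_grandMax d N ⇑T ψ hψ1 ?_
      refine (pi_norm_le_iff_of_nonneg zero_le_one).2 fun i => ?_
      have hxi1 : (⌊x i⌋ : ℝ) ≤ x i := Int.floor_le _
      have hxi2 : x i < (⌊x i⌋ : ℝ) + 1 := Int.lt_floor_add_one _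
      have hyi : ((⌊x i⌋ : ℝ)) ≤ y i ∧ y i < (⌊x i⌋ : ℝ) + 1 := hy i
      rw [Pi.sub_apply, Real.norm_eq_abs, abs_le]
      constructor <;> linarith [hyi.1, hyi.2]
    have hA : (‖sconv d ⇑T ψ 1 x‖₊ : ℝ≥0∞) ≤ amalgamNormE d q p (grandMaxNT d N ⇑T) :=
      le_amalgamNormE d hq0 hq hp0 hp _ _ _ hmem
    rw [hnorm, one_mul]
    exact mul_le_mul_right hA _


end
end
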